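/- arXiv:2302.06309 — 4 statements merged into one kernel-verified Lean document; each statement's English description precedes it below -/
import Mathlib

section
/- Suppose there exist constants $c_1, c_2 > 0$ such that for every bivariate Gaussian vector $X = (Z,Z)$ with $Z$ standard Gaussian, all increasing events $A_1, A_2$ depending on the respective coordinates, and all $\varepsilon > 0$, one has $\Pr[X \in A_1 \cap A_2] - \Pr[X + \varepsilon\mathbf{1} \in A_1]\Pr[X + \varepsilon\mathbf{1} \in A_2] \le c_1 e^{-c_2 \varepsilon^2 / \|K_{I_1,I_2}\|_\infty}$. Then $c_2 \le 3 + 2\sqrt{2}$. -/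
open MeasureTheory ProbabilityTheory

/-- An event `A ⊆ ℝⁿ` is increasing if it is closed under adding coordinatewise
nonnegative vectors. -/
def IncreasingEvent {n : ℕ} (A : Set (Fin n → ℝ)) : Prop :=
  ∀ x ∈ A, ∀ v : Fin n → ℝ, (∀ i, 0 ≤ v i) → x + v ∈ A

/-- An event `A` is supported on `I` if membership is unchanged by modifying
coordinates outside `I`. -/
def SupportedOn {n : ℕ} (A : Set (Fin n → ℝ)) (I : Set (Fin n)) : Prop :=
  ∀ x y : Fin n → ℝ, (∀ i ∈ I, x i = y i) → (x ∈ A ↔ y ∈ A)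

/-- `X` is a Gaussian vector: every linear combination of coordinates is Gaussian. -/
def IsGaussianVector {Ω : Type*} [MeasureSpace Ω] {n : ℕ} (X : Ω → Fin n → ℝ) : Prop :=
  ∀ a : Fin n → ℝ, ∃ (m : ℝ) (v : NNReal),
    Measure.map (fun ω => ∑ i, a i * X ω i) ℙ = gaussianReal m v

/-- The threshold `T_A(x) = sup {u : x - u·𝟙 ∈ A}` of an increasing event. -/
noncomputable def thr {n : ℕ} (A : Set (Fin n → ℝ)) (x : Fin n → ℝ) : ℝ :=
  sSup {u : ℝ | (fun i => x i - u) ∈ A}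

/-- `‖K_{I₁,I₂}‖_∞ = max_{i ∈ I₁, j ∈ I₂} |K(i,j)|`. -/
noncomputable def kNorm {n : ℕ} (K : Fin n → Fin n → ℝ) (I1 I2 : Finset (Fin n)) : ℝ :=
  sSup {r : ℝ | ∃ i ∈ I1, ∃ j ∈ I2, r = |K i j|}

open Real in
lemma tail_ub_aux {v : ℝ} (hv : 0 ≤ v) :
    ∫ x in Set.Ici v, gaussianPDFReal 0 1 x ≤ Real.exp (-v^2/2) := by
  have h1 : ∀ x ∈ Set.Ici v, gaussianPDFReal 0 1 x
      ≤ Real.exp (-v^2/2) * gaussianPDFReal v 1 x := by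
    intro x hx
    simp only [Set.mem_Ici] at hx
    simp only [gaussianPDFReal, NNReal.coe_one, mul_one, sub_zero]
    rw [mul_comm (Real.exp _), mul_assoc, ← Real.exp_add]
    have hs : (0:ℝ) ≤ (√(2 * π))⁻¹ := by positivity
    exact mul_le_mul_of_nonneg_left (Real.exp_le_exp.mpr (by nlinarith)) hs
  calc ∫ x in Set.Ici v, gaussianPDFReal 0 1 x
      ≤ ∫ x in Set.Ici v, Real.exp (-v^2/2) * gaussianPDFReal v 1 x := by
        refine setIntegral_mono_on ((integrable_gaussianPDFReal 0 1).restrict)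
          (((integrable_gaussianPDFReal v 1).const_mul _).restrict) measurableSet_Ici h1
    _ ≤ ∫ x, Real.exp (-v^2/2) * gaussianPDFReal v 1 x := by
        refine setIntegral_le_integral ((integrable_gaussianPDFReal v 1).const_mul _)
          (Filter.Eventually.of_forall fun x =>
            mul_nonneg (Real.exp_nonneg _) (gaussianPDFReal_nonneg _ _ _))
    _ = Real.exp (-v^2/2) := by
        rw [integral_const_mul, integral_gaussianPDFReal_eq_one v one_ne_zero, mul_one]

open Real in
lemma tail_lb_aux {u : ℝ} (hu : 0 ≤ u) :
    (Real.sqrt (2*π))⁻¹ * Real.exp (-(u+1)^2/2) ≤ ∫ x in Set.Ici u, gaussianPDFReal 0 1 x := by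
  have key : (Real.sqrt (2*π))⁻¹ * Real.exp (-(u+1)^2/2)
      ≤ ∫ x in Set.Icc u (u+1), gaussianPDFReal 0 1 x := by
    have h1 : ∀ x ∈ Set.Icc u (u+1), (Real.sqrt (2*π))⁻¹ * Real.exp (-(u+1)^2/2)
        ≤ gaussianPDFReal 0 1 x := by
      intro x hx
      obtain ⟨hx1, hx2⟩ := hx
      simp only [gaussianPDFReal, NNReal.coe_one, mul_one, sub_zero]
      exact mul_le_mul_of_nonneg_left (Real.exp_le_exp.mpr (by nlinarith)) (by positivity)
    have := setIntegral_mono_on (integrableOn_const (by simp [Real.volume_Icc]) enorm_ne_top)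
      ((integrable_gaussianPDFReal 0 1).restrict) measurableSet_Icc h1
    calc (Real.sqrt (2*π))⁻¹ * Real.exp (-(u+1)^2/2)
        = ∫ _ in Set.Icc u (u+1), (Real.sqrt (2*π))⁻¹ * Real.exp (-(u+1)^2/2) := by
          rw [setIntegral_const, measureReal_def, Real.volume_Icc]
          simp
      _ ≤ _ := this
  refine key.trans (setIntegral_mono_set ((integrable_gaussianPDFReal 0 1).restrict)
    (Filter.Eventually.of_forall fun x => gaussianPDFReal_nonneg 0 1 x)
    (HasSubset.Subset.eventuallyLE (Set.Icc_subset_Ici_self)))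

lemma tail_eq_aux {Ω : Type*} [MeasureSpace Ω] (Z : Ω → ℝ)
    (hZ : Measure.map Z ℙ = gaussianReal 0 1) (t : ℝ) :
    (ℙ {ω | t ≤ Z ω}).toReal = ∫ x in Set.Ici t, gaussianPDFReal 0 1 x := by
  have hae : AEMeasurable Z ℙ := by
    by_contra h
    rw [Measure.map_of_not_aemeasurable h] at hZ
    have : (gaussianReal 0 1) Set.univ = 1 := measure_univ
    rw [← hZ] at this
    simp at this
  have h1 : {ω | t ≤ Z ω} = Z ⁻¹' Set.Ici t := rfl
  rw [h1, ← Measure.map_apply_of_aemeasurable hae measurableSet_Ici, hZ,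
    gaussianReal_apply_eq_integral 0 one_ne_zero,
    ENNReal.toReal_ofReal (setIntegral_nonneg measurableSet_Ici
      fun x _ => gaussianPDFReal_nonneg 0 1 x)]

set_option maxHeartbeats 2000000 in
theorem stmt7 {Ω : Type*} [MeasureSpace Ω] [IsProbabilityMeasure (ℙ : Measure Ω)]
    (Z : Ω → ℝ) (hZ : Measure.map Z ℙ = gaussianReal 0 1)
    (c1 c2 : ℝ) (hc1 : 0 < c1) (hc2 : 0 < c2)
    (hyp : ∀ A1 A2 : Set (Fin 2 → ℝ),
      IncreasingEvent A1 → IncreasingEvent A2 →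
      SupportedOn A1 {0} → SupportedOn A2 {1} →
      ∀ ε : ℝ, 0 < ε →
        (ℙ {ω | (fun _ : Fin 2 => Z ω) ∈ A1 ∩ A2}).toReal -
            (ℙ {ω | (fun _ : Fin 2 => Z ω + ε) ∈ A1}).toReal *
              (ℙ {ω | (fun _ : Fin 2 => Z ω + ε) ∈ A2}).toReal ≤
          c1 * Real.exp (-c2 * ε ^ 2)) :
    c2 ≤ 3 + 2 * Real.sqrt 2 := by
  by_contra hcon
  push_neg at hcon
  -- choice of κ
  obtain ⟨s, hs_def⟩ : ∃ x : ℝ, x = Real.sqrt (1/(2*c2)) := ⟨_, rfl⟩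
  have hs0 : 0 ≤ s := hs_def ▸ Real.sqrt_nonneg _
  have hs2 : s^2 = 1/(2*c2) := hs_def ▸ Real.sq_sqrt (by positivity)
  have hs1 : 2*c2*s^2 = 1 := by rw [hs2]; field_simp
  have hsq2 : Real.sqrt 2 ^ 2 = 2 := Real.sq_sqrt (by norm_num)
  have hsq2' : 0 ≤ Real.sqrt 2 := Real.sqrt_nonneg 2
  obtain ⟨κ0, hκ0_def⟩ : ∃ x : ℝ, x = 1 - Real.sqrt 2 / 2 := ⟨_, rfl⟩
  have hrt2 : Real.sqrt 2 < 2 := by nlinarith [hsq2, hsq2']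
  have hκ00 : 0 < κ0 := by rw [hκ0_def]; linarith
  have hκ0sq : κ0^2 = 3/2 - Real.sqrt 2 := by rw [hκ0_def]; linear_combination hsq2/4
  have h32 : 0 < 3 - 2*Real.sqrt 2 := by nlinarith [hsq2, hsq2']
  have hs2lt : s^2 < κ0^2 := by
    rw [hs2, hκ0sq, div_lt_iff₀ (by positivity)]
    linarith [mul_lt_mul_of_pos_left hcon h32, hsq2]
  have hsκ0 : s < κ0 := lt_of_pow_lt_pow_left₀ 2 hκ00.le hs2lt
  obtain ⟨κ, hκ_def⟩ : ∃ x : ℝ, x = (s + κ0)/2 := ⟨_, rfl⟩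
  have hκpos : 0 < κ := by rw [hκ_def]; linarith
  have hκltκ0 : κ < κ0 := by rw [hκ_def]; linarith
  have hsltκ : s < κ := by rw [hκ_def]; linarith
  have hκlt1 : κ < 1 := by
    have h2pos : 0 < Real.sqrt 2 := by nlinarith
    have : κ0 < 1 := by rw [hκ0_def]; linarith
    linarith
  have hκ2 : s^2 < κ^2 := by
    have := pow_lt_pow_left₀ hsltκ hs0 two_ne_zero
    linarith
  have hk1 : 1/2 < c2*κ^2 := by linarith [mul_lt_mul_of_pos_left hκ2 hc2]
  have hk2 : 1/2 < (1-κ)^2 := by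
    have ha : Real.sqrt 2/2 < 1-κ := by rw [hκ0_def] at hκltκ0; linarith
    have hb := pow_lt_pow_left₀ ha (by positivity) two_ne_zero
    nlinarith [hsq2, hb]
  obtain ⟨δ, hδ_def⟩ : ∃ x : ℝ, x = min (c2*κ^2 - 1/2) ((1-κ)^2 - 1/2) := ⟨_, rfl⟩
  have hδ : 0 < δ := hδ_def ▸ lt_min (by linarith) (by linarith)
  have hδ1 : δ ≤ c2*κ^2 - 1/2 := hδ_def ▸ min_le_left _ _
  have hδ2 : δ ≤ (1-κ)^2 - 1/2 := hδ_def ▸ min_le_right _ _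
  -- key inequality for every u > 0
  have key : ∀ u : ℝ, 0 < u →
      (Real.sqrt (2*Real.pi))⁻¹ * Real.exp (-(u+1)^2/2)
        ≤ (1+c1) * Real.exp (-(1/2+δ)*u^2) := by
    intro u hu
    have hε : 0 < κ*u := mul_pos hκpos hu
    have H := hyp {x | u ≤ x 0} {x | u ≤ x 1}
      (fun x hx v hv => by
        simp only [Set.mem_setOf_eq, Pi.add_apply] at hx ⊢; linarith [hv 0])
      (fun x hx v hv => by
        simp only [Set.mem_setOf_eq, Pi.add_apply] at hx ⊢; linarith [hv 1])
      (fun x y h => by simp only [Set.mem_setOf_eq, h 0 rfl])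
      (fun x y h => by simp only [Set.mem_setOf_eq, h 1 rfl])
      (κ*u) hε
    have e1 : {ω | (fun _ : Fin 2 => Z ω) ∈
        ({x : Fin 2 → ℝ | u ≤ x 0} ∩ {x : Fin 2 → ℝ | u ≤ x 1})} = {ω | u ≤ Z ω} := by
      ext ω; simp [Set.mem_setOf_eq]
    have e2 : {ω | (fun _ : Fin 2 => Z ω + κ*u) ∈ {x : Fin 2 → ℝ | u ≤ x 0}}
        = {ω | u - κ*u ≤ Z ω} := by
      ext ω
      simp only [Set.mem_setOf_eq]
      constructor <;> intro h <;> linarith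
    have e3 : {ω | (fun _ : Fin 2 => Z ω + κ*u) ∈ {x : Fin 2 → ℝ | u ≤ x 1}}
        = {ω | u - κ*u ≤ Z ω} := by
      ext ω
      simp only [Set.mem_setOf_eq]
      constructor <;> intro h <;> linarith
    rw [e1, e2, e3, tail_eq_aux Z hZ u, tail_eq_aux Z hZ (u - κ*u)] at H
    have h2 : 0 ≤ u - κ*u := by
      have : κ*u ≤ 1*u := mul_le_mul_of_nonneg_right hκlt1.le hu.le
      linarith
    have hA := tail_lb_aux hu.le
    have hB := tail_ub_aux h2
    have hBnn : 0 ≤ ∫ x in Set.Ici (u - κ*u), gaussianPDFReal 0 1 x :=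
      setIntegral_nonneg measurableSet_Ici fun x _ => gaussianPDFReal_nonneg 0 1 x
    have hsq : (∫ x in Set.Ici (u - κ*u), gaussianPDFReal 0 1 x)
          * (∫ x in Set.Ici (u - κ*u), gaussianPDFReal 0 1 x)
        ≤ Real.exp (-(u - κ*u)^2/2) * Real.exp (-(u - κ*u)^2/2) :=
      mul_le_mul hB hB hBnn (Real.exp_nonneg _)
    rw [← Real.exp_add] at hsq
    have h3 : Real.exp (-(u - κ*u)^2/2 + -(u - κ*u)^2/2) ≤ Real.exp (-(1/2+δ)*u^2) :=
      Real.exp_le_exp.mpr (by linarith [mul_le_mul_of_nonneg_right hδ2 (sq_nonneg u)])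
    have h4 : c1 * Real.exp (-c2*(κ*u)^2) ≤ c1 * Real.exp (-(1/2+δ)*u^2) :=
      mul_le_mul_of_nonneg_left
        (Real.exp_le_exp.mpr (by linarith [mul_le_mul_of_nonneg_right hδ1 (sq_nonneg u)]))
        hc1.le
    calc (Real.sqrt (2*Real.pi))⁻¹ * Real.exp (-(u+1)^2/2)
        ≤ ∫ x in Set.Ici u, gaussianPDFReal 0 1 x := hA
      _ ≤ (∫ x in Set.Ici (u - κ*u), gaussianPDFReal 0 1 x)
            * (∫ x in Set.Ici (u - κ*u), gaussianPDFReal 0 1 x)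
          + c1 * Real.exp (-c2*(κ*u)^2) := by linarith
      _ ≤ Real.exp (-(1/2+δ)*u^2) + c1 * Real.exp (-(1/2+δ)*u^2) :=
          add_le_add (hsq.trans h3) h4
      _ = (1+c1) * Real.exp (-(1/2+δ)*u^2) := by ring
  -- derive contradiction with u large
  have hS : 0 < Real.sqrt (2*Real.pi) := Real.sqrt_pos.mpr (by positivity)
  obtain ⟨M, hM_def⟩ : ∃ x : ℝ, x = Real.log ((1+c1) * Real.sqrt (2*Real.pi)) := ⟨_, rfl⟩
  obtain ⟨u, hu_def⟩ : ∃ x : ℝ, x = max (M + 3/2) (2/δ) := ⟨_, rfl⟩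
  have hu : 0 < u := hu_def ▸ lt_of_lt_of_le (by positivity) (le_max_right _ _)
  have hu1 : M + 3/2 ≤ u := hu_def ▸ le_max_left _ _
  have hu2 : 2 ≤ u * δ := (div_le_iff₀ hδ).1 (hu_def ▸ le_max_right (M + 3/2) (2/δ))
  have h1 := key u hu
  have hexp : -(1/2+δ)*u^2 ≤ -(u+1)^2/2 + -(M+1) := by
    linarith [mul_nonneg (show (0:ℝ) ≤ u*δ - 2 by linarith) hu.le, hu1]
  have h2 : (1+c1) * Real.exp (-(1/2+δ)*u^2)
      ≤ (1+c1) * (Real.exp (-(u+1)^2/2) * Real.exp (-(M+1))) := by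
    rw [← Real.exp_add]
    exact mul_le_mul_of_nonneg_left (Real.exp_le_exp.mpr hexp) (by linarith)
  have hM1 : Real.exp (-(M+1)) = ((1+c1)*Real.sqrt (2*Real.pi))⁻¹ * Real.exp (-1) := by
    rw [show -(M+1) = -M + -1 by ring, Real.exp_add, Real.exp_neg, hM_def,
      Real.exp_log (by positivity)]
  have final := h1.trans h2
  rw [hM1] at final
  have hE : 0 < Real.exp (-(u+1)^2/2) := Real.exp_pos _
  have heq : (1+c1) * (Real.exp (-(u+1)^2/2) * (((1+c1)*Real.sqrt (2*Real.pi))⁻¹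
        * Real.exp (-1)))
      = (Real.sqrt (2*Real.pi))⁻¹ * Real.exp (-(u+1)^2/2) * Real.exp (-1) := by
    field_simp
  rw [heq] at final
  have h5 : Real.exp (-1:ℝ) < 1 := by
    have := Real.exp_lt_exp.mpr (show (-1:ℝ) < 0 by norm_num)
    rwa [Real.exp_zero] at this
  linarith [final, mul_pos (mul_pos (inv_pos.mpr hS) hE) (sub_pos.mpr h5)]
end

section
/- Let $\Phi$ denote the standard Gaussian CDF and for $\rho \in [-1,1]$ let $\Phi_\rho(u,v) = \Pr[Z \le u, \rho Z + \sqrt{1-\rho^2}Z' \le v]$ where $Z, Z'$ are independent standard Gaussians. Then for all $\rho \in (0,1]$, all $u, v \in \mathbb{R}$, and all $\varepsilon \ge 0$: $\Phi_\rho(u,v) \le \Phi(u)\Phi(v+\varepsilon) + e^{-\varepsilon^2/(8\rho^2)}$. -/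
open MeasureTheory ProbabilityTheory Real

section aux

noncomputable def stdG : Measure ℝ := gaussianReal 0 1

instance : IsProbabilityMeasure stdG := by unfold stdG; infer_instance

lemma stdG_eq : stdG = (volume : Measure ℝ).withDensity (gaussianPDF 0 1) :=
  gaussianReal_of_var_ne_zero 0 one_ne_zero

lemma prodRep : stdG.prod stdG
    = (volume : Measure (ℝ × ℝ)).withDensity (fun p => gaussianPDF 0 1 p.1 * gaussianPDF 0 1 p.2) := by
  refine Measure.prod_eq fun s t hs ht => ?_
  rw [show (volume : Measure (ℝ × ℝ)) = (volume : Measure ℝ).prod volume from rfl,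
    withDensity_apply _ (hs.prod ht), ← Measure.prod_restrict,
    lintegral_prod_mul ((measurable_gaussianPDF 0 1).aemeasurable)
      ((measurable_gaussianPDF 0 1).aemeasurable),
    stdG_eq, withDensity_apply _ hs, withDensity_apply _ ht]

noncomputable def rotL (a b : ℝ) : ℝ × ℝ →ₗ[ℝ] ℝ × ℝ where
  toFun p := (a * p.1 + b * p.2, -b * p.1 + a * p.2)
  map_add' p q := by simp; constructor <;> ring
  map_smul' c p := by simp; constructor <;> ring

lemma rotL_det (a b : ℝ) : LinearMap.det (rotL a b) = a ^ 2 + b ^ 2 := by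
  rw [← LinearMap.det_toMatrix (Module.Basis.finTwoProd ℝ), Matrix.det_fin_two]
  simp [LinearMap.toMatrix_apply, rotL, Module.Basis.finTwoProd]
  ring

lemma rotL_mp (a b : ℝ) (hab : a ^ 2 + b ^ 2 = 1) :
    MeasurePreserving (rotL a b) (volume : Measure (ℝ × ℝ)) volume := by
  have hdet : LinearMap.det (rotL a b) ≠ 0 := by rw [rotL_det, hab]; norm_num
  refine ⟨(rotL a b).continuous_of_finiteDimensional.measurable, ?_⟩
  rw [Measure.map_linearMap_addHaar_eq_smul_addHaar _ hdet, rotL_det, hab]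
  simp

lemma pdfReal_rot (a b x y : ℝ) (hab : a ^ 2 + b ^ 2 = 1) :
    gaussianPDFReal 0 1 (a * x + b * y) * gaussianPDFReal 0 1 (-b * x + a * y)
      = gaussianPDFReal 0 1 x * gaussianPDFReal 0 1 y := by
  simp only [gaussianPDFReal_def, NNReal.coe_one, mul_one, sub_zero]
  rw [mul_mul_mul_comm, ← Real.exp_add, mul_mul_mul_comm _ (rexp _), ← Real.exp_add]
  congr 2
  linear_combination (-(x ^ 2 + y ^ 2) / 2) * hab

/-- rotation invariance of the two-dimensional standard Gaussian -/
lemma prod_rot_inv (a b : ℝ) (hab : a ^ 2 + b ^ 2 = 1) {A : Set (ℝ × ℝ)}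
    (hA : MeasurableSet A) :
    stdG.prod stdG (rotL a b ⁻¹' A) = stdG.prod stdG A := by
  set F : ℝ × ℝ → ENNReal := fun p => gaussianPDF 0 1 p.1 * gaussianPDF 0 1 p.2 with hF
  have hForn : Measurable F :=
    ((measurable_gaussianPDF 0 1).comp measurable_fst).mul
      ((measurable_gaussianPDF 0 1).comp measurable_snd)
  have hmp := rotL_mp a b hab
  rw [prodRep, withDensity_apply _ (hmp.measurable hA), withDensity_apply _ hA,
    ← lintegral_indicator (hmp.measurable hA) F, ← lintegral_indicator hA F]
  have key : ∀ p : ℝ × ℝ, (rotL a b ⁻¹' A).indicator F p = A.indicator F (rotL a b p) := by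
    intro p
    have hFp : F (rotL a b p) = F p := by
      simp only [hF, gaussianPDF]
      rw [← ENNReal.ofReal_mul (gaussianPDFReal_nonneg _ _ _),
        ← ENNReal.ofReal_mul (gaussianPDFReal_nonneg _ _ _)]
      congr 1
      exact pdfReal_rot a b p.1 p.2 hab
    by_cases hp : rotL a b p ∈ A
    · rw [Set.indicator_of_mem hp, Set.indicator_of_mem (show p ∈ _ ⁻¹' A from hp), hFp]
    · rw [Set.indicator_of_notMem hp, Set.indicator_of_notMem (show p ∉ _ ⁻¹' A from hp)]
  calc ∫⁻ p, (rotL a b ⁻¹' A).indicator F p = ∫⁻ p, A.indicator F (rotL a b p) := by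
        simp_rw [key]
    _ = ∫⁻ p, A.indicator F p := hmp.lintegral_comp (hForn.indicator hA)

/-- the law of `a Z + b Z'` is standard Gaussian when `a² + b² = 1` -/
lemma sum_law (a b c : ℝ) (hab : a ^ 2 + b ^ 2 = 1) :
    stdG.prod stdG {p : ℝ × ℝ | a * p.1 + b * p.2 ≤ c} = stdG (Set.Iic c) := by
  have h1 : {p : ℝ × ℝ | a * p.1 + b * p.2 ≤ c} = rotL a b ⁻¹' (Set.Iic c ×ˢ Set.univ) := by
    ext p; simp [rotL, Set.mem_prod]
  rw [h1, prod_rot_inv a b hab (measurableSet_Iic.prod MeasurableSet.univ),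
    Measure.prod_prod, measure_univ, mul_one]

lemma stdG_neg (t : ℝ) : stdG (Set.Iio (-t)) = stdG (Set.Ioi t) := by
  have h := gaussianReal_map_const_mul (μ := 0) (v := 1) (-1)
  have h2 : (⟨(-1 : ℝ) ^ 2, sq_nonneg _⟩ : NNReal) * 1 = 1 := by
    ext; norm_num
  replace h : Measure.map (fun x => (-1 : ℝ) * x) (gaussianReal 0 1) = gaussianReal 0 1 := by
    rw [h]; congr 1
    · simp
  have : stdG (Set.Iio (-t)) = Measure.map (fun x => (-1 : ℝ) * x) stdG (Set.Iio (-t)) := by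
    rw [show Measure.map (fun x => (-1 : ℝ) * x) stdG = stdG from h]
  rw [this, Measure.map_apply (by fun_prop) measurableSet_Iio]
  congr 1
  ext x
  simp only [Set.mem_preimage, Set.mem_Iio, Set.mem_Ioi]
  constructor <;> intro hx <;> nlinarith

lemma integral_pdf_Ioi_zero : ∫ x in Set.Ioi (0 : ℝ), gaussianPDFReal 0 1 x = 1 / 2 := by
  simp only [gaussianPDFReal_def, NNReal.coe_one, mul_one, sub_zero]
  rw [MeasureTheory.integral_const_mul]
  have h : ∀ x : ℝ, -x ^ 2 / 2 = -(1 / 2) * x ^ 2 := fun x => by ring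
  simp_rw [h]
  rw [integral_gaussian_Ioi, show π / (1 / 2) = 2 * π by ring]
  have h2 : Real.sqrt (2 * π) ≠ 0 := by positivity
  field_simp

lemma stdG_tail (t : ℝ) (ht : 0 ≤ t) :
    stdG (Set.Ioi t) ≤ ENNReal.ofReal (Real.exp (-t ^ 2 / 2) * (1 / 2)) := by
  rw [show stdG = gaussianReal 0 1 from rfl, gaussianReal_apply_eq_integral 0 one_ne_zero]
  apply ENNReal.ofReal_le_ofReal
  have hint1 : IntegrableOn (gaussianPDFReal 0 1) (Set.Ioi t) volume :=
    (integrable_gaussianPDFReal 0 1).integrableOn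
  have hint2 : IntegrableOn (fun x => Real.exp (-t ^ 2 / 2) * gaussianPDFReal 0 1 (x - t))
      (Set.Ioi t) volume :=
    (((integrable_gaussianPDFReal 0 1).comp_sub_right t).const_mul _).integrableOn
  have hpt : ∀ x ∈ Set.Ioi t, gaussianPDFReal 0 1 x
      ≤ Real.exp (-t ^ 2 / 2) * gaussianPDFReal 0 1 (x - t) := by
    intro x hx
    simp only [Set.mem_Ioi] at hx
    simp only [gaussianPDFReal_def, NNReal.coe_one, mul_one, sub_zero]
    rw [← mul_assoc, mul_comm (Real.exp (-t ^ 2 / 2)), mul_assoc, ← Real.exp_add]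
    have hC : (0 : ℝ) ≤ (Real.sqrt (2 * π))⁻¹ := by positivity
    refine mul_le_mul_of_nonneg_left (Real.exp_le_exp.2 ?_) hC
    nlinarith [mul_nonneg ht (le_of_lt (sub_pos.2 hx))]
  calc ∫ x in Set.Ioi t, gaussianPDFReal 0 1 x
      ≤ ∫ x in Set.Ioi t, Real.exp (-t ^ 2 / 2) * gaussianPDFReal 0 1 (x - t) :=
        setIntegral_mono_on hint1 hint2 measurableSet_Ioi hpt
    _ = Real.exp (-t ^ 2 / 2) * ∫ x in Set.Ioi t, gaussianPDFReal 0 1 (x - t) :=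
        MeasureTheory.integral_const_mul _ _
    _ = Real.exp (-t ^ 2 / 2) * (1 / 2) := by
        congr 1
        rw [← MeasureTheory.integral_indicator measurableSet_Ioi]
        have : ∀ x : ℝ, (Set.Ioi t).indicator (fun x => gaussianPDFReal 0 1 (x - t)) x
            = (Set.Ioi 0).indicator (gaussianPDFReal 0 1) (x - t) := by
          intro x
          by_cases hx : x ∈ Set.Ioi t
          · rw [Set.indicator_of_mem hx, Set.indicator_of_mem (by simp at hx ⊢; linarith)]
          · rw [Set.indicator_of_notMem hx, Set.indicator_of_notMem (by simp at hx ⊢; linarith)]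
        simp_rw [this]
        rw [MeasureTheory.integral_sub_right_eq_self ((Set.Ioi (0:ℝ)).indicator (gaussianPDFReal 0 1)) t,
          MeasureTheory.integral_indicator measurableSet_Ioi, integral_pdf_Ioi_zero]

end aux

/-- The standard Gaussian CDF. -/
noncomputable def Phi (u : ℝ) : ℝ := ((gaussianReal 0 1) (Set.Iic u)).toReal

/-- The CDF of a ρ-correlated bivariate standard Gaussian vector:
`Φ_ρ(u,v) = P[Z ≤ u, ρZ + √(1-ρ²) Z' ≤ v]` for independent standard Gaussians `Z, Z'`. -/
noncomputable def Phi2 (ρ u v : ℝ) : ℝ :=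
  (((gaussianReal 0 1).prod (gaussianReal 0 1))
    {p : ℝ × ℝ | p.1 ≤ u ∧ ρ * p.1 + Real.sqrt (1 - ρ ^ 2) * p.2 ≤ v}).toReal

theorem stmt8 (ρ : ℝ) (hρ0 : 0 < ρ) (hρ1 : ρ ≤ 1) (u v ε : ℝ) (hε : 0 ≤ ε) :
    Phi2 ρ u v ≤ Phi u * Phi (v + ε) + Real.exp (-ε ^ 2 / (8 * ρ ^ 2)) := by
  have hρne : ρ ≠ 0 := ne_of_gt hρ0
  set s : ℝ := Real.sqrt (1 - ρ ^ 2) with hs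
  have hs0 : 0 ≤ s := Real.sqrt_nonneg _
  have hs2 : ρ ^ 2 + s ^ 2 = 1 := by
    rw [hs, Real.sq_sqrt (by nlinarith : (0:ℝ) ≤ 1 - ρ ^ 2)]; ring
  set t : ℝ := ε / (2 * ρ) with htdef
  have ht0 : 0 ≤ t := by positivity
  set A : Set (ℝ × ℝ) := {p : ℝ × ℝ | p.1 ≤ u ∧ ρ * p.1 + s * p.2 ≤ v} with hA
  set T : Set ℝ := {y : ℝ | s * y ≤ v + ε / 2} with hT
  set B : Set (ℝ × ℝ) := Set.Iic u ×ˢ T with hB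
  set C : Set (ℝ × ℝ) := Set.Iio (-t) ×ˢ Set.univ with hC
  -- A ⊆ B ∪ C
  have hsub : A ⊆ B ∪ C := by
    intro p hp
    obtain ⟨h1, h2⟩ := hp
    by_cases hp1 : p.1 < -t
    · exact Or.inr ⟨hp1, Set.mem_univ _⟩
    · push_neg at hp1
      refine Or.inl ⟨h1, ?_⟩
      have : -(ε / 2) ≤ ρ * p.1 := by
        rw [htdef] at hp1
        calc -(ε / 2) = ρ * (-(ε / (2 * ρ))) := by field_simp
          _ ≤ ρ * p.1 := by exact mul_le_mul_of_nonneg_left hp1 (le_of_lt hρ0)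
      show s * p.2 ≤ v + ε / 2
      linarith
  -- T inclusion in the product space
  have hTsub : (Set.univ ×ˢ T : Set (ℝ × ℝ))
      ⊆ {p : ℝ × ℝ | ρ * p.1 + s * p.2 ≤ v + ε} ∪ (Set.Ioi t ×ˢ Set.univ) := by
    intro p hp
    obtain ⟨-, hp2⟩ := hp
    by_cases hp1 : t < p.1
    · exact Or.inr ⟨hp1, Set.mem_univ _⟩
    · push_neg at hp1
      refine Or.inl ?_
      have : ρ * p.1 ≤ ε / 2 := by
        calc ρ * p.1 ≤ ρ * t := mul_le_mul_of_nonneg_left hp1 (le_of_lt hρ0)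
          _ = ε / 2 := by rw [htdef]; field_simp
      have hp2' : s * p.2 ≤ v + ε / 2 := hp2
      show ρ * p.1 + s * p.2 ≤ v + ε
      linarith
  have hTbound : stdG T ≤ stdG (Set.Iic (v + ε)) + stdG (Set.Ioi t) := by
    have h1 : stdG T = stdG.prod stdG (Set.univ ×ˢ T) := by
      rw [Measure.prod_prod, measure_univ, one_mul]
    rw [h1]
    calc stdG.prod stdG (Set.univ ×ˢ T)
        ≤ stdG.prod stdG ({p : ℝ × ℝ | ρ * p.1 + s * p.2 ≤ v + ε} ∪ (Set.Ioi t ×ˢ Set.univ)) :=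
          measure_mono hTsub
      _ ≤ stdG.prod stdG {p : ℝ × ℝ | ρ * p.1 + s * p.2 ≤ v + ε}
          + stdG.prod stdG (Set.Ioi t ×ˢ Set.univ) := measure_union_le _ _
      _ = stdG (Set.Iic (v + ε)) + stdG (Set.Ioi t) := by
          rw [sum_law ρ s (v + ε) hs2, Measure.prod_prod, measure_univ, mul_one]
  have htail : stdG (Set.Ioi t) ≤ ENNReal.ofReal (Real.exp (-t ^ 2 / 2) * (1 / 2)) :=
    stdG_tail t ht0
  have hmain : stdG.prod stdG A
      ≤ stdG (Set.Iic u) * stdG (Set.Iic (v + ε)) + ENNReal.ofReal (Real.exp (-t ^ 2 / 2)) := by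
    calc stdG.prod stdG A ≤ stdG.prod stdG (B ∪ C) := measure_mono hsub
      _ ≤ stdG.prod stdG B + stdG.prod stdG C := measure_union_le _ _
      _ = stdG (Set.Iic u) * stdG T + stdG (Set.Iio (-t)) := by
          rw [hB, hC, Measure.prod_prod, Measure.prod_prod, measure_univ, mul_one]
      _ ≤ stdG (Set.Iic u) * (stdG (Set.Iic (v + ε)) + stdG (Set.Ioi t)) + stdG (Set.Ioi t) := by
          rw [stdG_neg]
          exact add_le_add_left (mul_le_mul_right hTbound _) _
      _ = stdG (Set.Iic u) * stdG (Set.Iic (v + ε))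
          + (stdG (Set.Iic u) * stdG (Set.Ioi t) + stdG (Set.Ioi t)) := by ring_nf
      _ ≤ stdG (Set.Iic u) * stdG (Set.Iic (v + ε))
          + (ENNReal.ofReal (Real.exp (-t ^ 2 / 2) * (1 / 2))
            + ENNReal.ofReal (Real.exp (-t ^ 2 / 2) * (1 / 2))) := by
          have h1 : stdG (Set.Iic u) * stdG (Set.Ioi t)
              ≤ ENNReal.ofReal (Real.exp (-t ^ 2 / 2) * (1 / 2)) :=
            le_trans (mul_le_mul_left prob_le_one _) (by rw [one_mul]; exact htail)
          exact add_le_add_right (add_le_add h1 htail) _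
      _ = stdG (Set.Iic u) * stdG (Set.Iic (v + ε)) + ENNReal.ofReal (Real.exp (-t ^ 2 / 2)) := by
          rw [← ENNReal.ofReal_add (by positivity) (by positivity)]
          congr 1
          ring
  have hexp : Real.exp (-t ^ 2 / 2) = Real.exp (-ε ^ 2 / (8 * ρ ^ 2)) := by
    congr 1
    rw [htdef]
    ring
  rw [hexp] at hmain
  have hfin : stdG (Set.Iic u) * stdG (Set.Iic (v + ε))
      + ENNReal.ofReal (Real.exp (-ε ^ 2 / (8 * ρ ^ 2))) ≠ ⊤ :=
    ENNReal.add_ne_top.2 ⟨ENNReal.mul_ne_top (measure_ne_top _ _) (measure_ne_top _ _),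
      ENNReal.ofReal_ne_top⟩
  have := ENNReal.toReal_le_toReal (measure_ne_top _ _) hfin |>.2 hmain
  rw [ENNReal.toReal_add (ENNReal.mul_ne_top (measure_ne_top _ _) (measure_ne_top _ _))
    ENNReal.ofReal_ne_top, ENNReal.toReal_mul,
    ENNReal.toReal_ofReal (Real.exp_nonneg _)] at this
  unfold Phi2 Phi
  exact this
end

section
/- Let $X$ be an $n$-dimensional Gaussian vector with covariance $K$, and suppose $X \stackrel{d}{=} X_1 + X_2$ where $X_1$ is a Gaussian vector such that $X_1|_{I_1}$ and $X_1|_{I_2}$ are independent, and $X_2$ is a centred Gaussian vector (not necessarily independent of $X_1$) with $\max_{i \in I_1 \cup I_2}\mathrm{Var}[(X_2)_i] \le \sigma^2$. Then for all increasing events $A_1 \in \sigma(I_1)$, $A_2 \in \sigma(I_2)$ and all $\varepsilon > 0$: $\Pr[X \in A_1 \cap A_2] - \Pr[X + \varepsilon\mathbf{1} \in A_1]\Pr[X + \varepsilon\mathbf{1} \in A_2] \le 3\max\{|I_1|, |I_2|\}\, e^{-\varepsilon^2/(8\sigma^2)}$. -/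
open MeasureTheory ProbabilityTheory

namespace Stmt11Aux

open Real Filter Set Topology
open scoped ENNReal NNReal

/-! ### Gaussian integral computations -/

lemma sq_exp_integrable {b : ℝ} (hb : 0 < b) :
    Integrable (fun x : ℝ => x ^ 2 * Real.exp (-b * x ^ 2)) := by
  have h2 : Integrable (fun x : ℝ => Real.exp (-(b/2) * x ^ 2)) :=
    integrable_exp_neg_mul_sq (by linarith)
  refine Integrable.mono' (h2.const_mul (2/b)) ?_ ?_
  · exact ((continuous_pow 2).mul ((continuous_const.mul (continuous_pow 2)).rexp)).aestronglyMeasurable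
  · refine Filter.Eventually.of_forall fun x => ?_
    rw [norm_eq_abs, abs_of_nonneg (by positivity)]
    have h0 : (b/2)*x^2 + 1 ≤ Real.exp ((b/2)*x^2) := Real.add_one_le_exp _
    have hx2 : x^2 ≤ 2/b * Real.exp ((b/2)*x^2) := by
      rw [div_mul_eq_mul_div, le_div_iff₀ hb]; nlinarith
    have he : Real.exp ((b/2)*x^2) * Real.exp (-b*x^2) = Real.exp (-(b/2)*x^2) := by
      rw [← Real.exp_add]; ring_nf
    calc x ^ 2 * Real.exp (-b * x ^ 2)
        ≤ (2/b * Real.exp ((b/2)*x^2)) * Real.exp (-b*x^2) :=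
          mul_le_mul_of_nonneg_right hx2 (Real.exp_pos _).le
      _ = 2/b * Real.exp (-(b/2)*x^2) := by rw [mul_assoc, he]

lemma integral_sq_exp {b : ℝ} (hb : 0 < b) :
    ∫ x : ℝ, x ^ 2 * Real.exp (-b * x ^ 2) = Real.sqrt (π / b) / (2 * b) := by
  set f : ℝ → ℝ := fun x => -x * Real.exp (-b * x ^ 2) / (2 * b) with hf
  set φ : ℝ → ℝ := fun x => x ^ 2 * Real.exp (-b * x ^ 2) - Real.exp (-b * x ^ 2) / (2 * b) with hφ
  have hb' : b ≠ 0 := ne_of_gt hb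
  have hderiv : ∀ x : ℝ, HasDerivAt f (φ x) x := by
    intro x
    have h1 : HasDerivAt (fun x : ℝ => -b * x ^ 2) (-b * (2 * x ^ 1)) x :=
      (hasDerivAt_pow 2 x).const_mul (-b)
    have h2 := h1.exp
    have h3 := (hasDerivAt_id x).mul h2
    have h4 := h3.const_mul (-(2 * b)⁻¹)
    have h5 : f = fun y : ℝ => -(2 * b)⁻¹ * (id y * Real.exp (-b * y ^ 2)) := by
      funext y; simp only [hf, id]; first | (field_simp; ring) | field_simp
    rw [h5]
    refine h4.congr_deriv ?_
    simp only [hφ, id]; field_simp; ring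
  have hint_e : Integrable (fun x : ℝ => Real.exp (-b * x ^ 2)) := integrable_exp_neg_mul_sq hb
  have hint_sq := sq_exp_integrable hb
  have hintφ : Integrable φ := hint_sq.sub (hint_e.div_const _)
  have htop : Tendsto f atTop (𝓝 0) := by
    have ho := rpow_mul_exp_neg_mul_sq_isLittleO_exp_neg hb 1
    have hmul : Tendsto (fun x : ℝ => x * (-(1/2) : ℝ)) atTop atBot :=
      Filter.Tendsto.atTop_mul_const_of_neg (by norm_num) tendsto_id
    have h0 : Tendsto (fun x : ℝ => Real.exp (-(1/2) * x)) atTop (𝓝 0) := by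
      exact Filter.Tendsto.congr (fun x => by rw [Function.comp]; ring_nf)
        (Real.tendsto_exp_atBot.comp hmul)
    have h1 : Tendsto (fun x : ℝ => x ^ (1:ℝ) * Real.exp (-b * x ^ 2)) atTop (𝓝 0) :=
      ho.isBigO.trans_tendsto h0
    have h2 : Tendsto (fun x : ℝ => x * Real.exp (-b * x ^ 2)) atTop (𝓝 0) := by
      simpa [Real.rpow_one] using h1
    have h3 := (h2.neg).div_const (2 * b)
    simpa [hf, neg_mul, neg_div] using h3
  have hbot : Tendsto f atBot (𝓝 0) := by
    have h2 : Tendsto (fun x : ℝ => f (-x)) atTop (𝓝 0) := by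
      have heq : (fun x : ℝ => f (-x)) = fun x => -f x := by
        funext x; simp only [hf]; ring_nf
      rw [heq]
      simpa using htop.neg
    exact Filter.Tendsto.congr (fun x => by simp [Function.comp])
      (h2.comp tendsto_neg_atBot_atTop)
  have hIoi : ∫ x in Ioi (0:ℝ), φ x = 0 - f 0 :=
    integral_Ioi_of_hasDerivAt_of_tendsto' (fun x _ => hderiv x) hintφ.integrableOn htop
  have hIic : ∫ x in Iic (0:ℝ), φ x = f 0 - 0 :=
    integral_Iic_of_hasDerivAt_of_tendsto' (fun x _ => hderiv x) hintφ.integrableOn hbot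
  have hsplit : ∫ x : ℝ, φ x = (∫ x in Iic (0:ℝ), φ x) + ∫ x in Ioi (0:ℝ), φ x :=
    (intervalIntegral.integral_Iic_add_Ioi hintφ.integrableOn hintφ.integrableOn).symm
  have hφ0 : ∫ x : ℝ, φ x = 0 := by rw [hsplit, hIoi, hIic]; ring
  have hkey : ∫ x : ℝ, φ x = (∫ x : ℝ, x ^ 2 * Real.exp (-b * x ^ 2)) - (∫ x : ℝ, Real.exp (-b * x ^ 2)) / (2*b) := by
    rw [show φ = fun x => x ^ 2 * Real.exp (-b * x ^ 2) - Real.exp (-b * x ^ 2) / (2*b) from rfl]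
    rw [integral_sub hint_sq (hint_e.div_const _), integral_div]
  rw [hφ0, integral_gaussian] at hkey
  linarith [hkey]

/-! ### Moments of the Gaussian law -/

lemma my_integral_gaussianReal {m : ℝ} {v : NNReal} (hv : v ≠ 0) (g : ℝ → ℝ) :
    ∫ x, g x ∂(gaussianReal m v) = ∫ x, gaussianPDFReal m v x * g x := by
  rw [gaussianReal_of_var_ne_zero m hv]
  have h1 : gaussianPDF m v = fun x => (((gaussianPDFReal m v x).toNNReal : NNReal) : ENNReal) := rfl
  rw [h1, integral_withDensity_eq_integral_smul
    ((measurable_gaussianPDFReal m v).real_toNNReal) g]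
  congr 1; funext x
  rw [NNReal.smul_def, Real.coe_toNNReal _ (gaussianPDFReal_nonneg m v x), smul_eq_mul]

lemma my_integrable_gaussianReal {m : ℝ} {v : NNReal} (hv : v ≠ 0) (g : ℝ → ℝ)
    (h : Integrable (fun x => g x * gaussianPDFReal m v x)) :
    Integrable g (gaussianReal m v) := by
  rw [gaussianReal_of_var_ne_zero m hv]
  rw [integrable_withDensity_iff (measurable_gaussianPDF m v)
    (Filter.Eventually.of_forall fun x => ENNReal.ofReal_lt_top)]
  refine h.congr (Filter.Eventually.of_forall fun x => ?_)
  simp [gaussianPDF, ENNReal.toReal_ofReal (gaussianPDFReal_nonneg m v x)]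

lemma pdfReal_zero_eq {v : NNReal} (x : ℝ) :
    gaussianPDFReal 0 v x = (Real.sqrt (2 * π * v))⁻¹ * Real.exp (-(2 * (v:ℝ))⁻¹ * x ^ 2) := by
  have harg : -(x - 0)^2/(2*(v:ℝ)) = -(2*(v:ℝ))⁻¹ * x^2 := by
    by_cases hv : (v:ℝ) = 0
    · simp [hv]
    · field_simp; ring
  rw [gaussianPDFReal, harg]

lemma integrable_id_gaussian0 {v : NNReal} (hv : v ≠ 0) :
    Integrable (fun x => x) (gaussianReal 0 v) := by
  have hvpos : (0:ℝ) < v := lt_of_le_of_ne v.coe_nonneg (Ne.symm (NNReal.coe_ne_zero.mpr hv))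
  have hb : (0:ℝ) < (2 * (v:ℝ))⁻¹ := by positivity
  refine my_integrable_gaussianReal hv _ ?_
  have := (integrable_mul_exp_neg_mul_sq hb).const_mul ((Real.sqrt (2 * π * v))⁻¹)
  refine this.congr (Filter.Eventually.of_forall fun x => ?_)
  simp only [pdfReal_zero_eq]
  ring

lemma gaussian0_neg_invariant {v : NNReal} :
    (gaussianReal 0 v).map (fun x => (-1 : ℝ) * x) = gaussianReal 0 v := by
  have h := gaussianReal_map_const_mul (μ := 0) (v := v) (-1)
  simp only [mul_zero] at h
  convert h using 2
  ext
  norm_num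

lemma integral_id_gaussian0 {v : NNReal} : ∫ x, x ∂(gaussianReal 0 v) = 0 := by
  have h := integral_map (μ := gaussianReal 0 v)
    ((measurable_const_mul (-1:ℝ)).aemeasurable) (aestronglyMeasurable_id)
  rw [gaussian0_neg_invariant] at h
  simp only [id] at h
  have h3 : ∫ x, (-1 : ℝ) * x ∂(gaussianReal 0 v) = -∫ x, x ∂(gaussianReal 0 v) := by
    simp only [neg_one_mul]
    exact integral_neg _
  have h2 : ∫ x, x ∂(gaussianReal 0 v) = -∫ x, x ∂(gaussianReal 0 v) := by
    rw [← h3]; exact h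
  linarith

lemma integral_id_gaussian (m : ℝ) (v : NNReal) : ∫ x, x ∂(gaussianReal m v) = m := by
  by_cases hv : v = 0
  · rw [hv, gaussianReal_zero_var, integral_dirac]
  · have hmap : (gaussianReal 0 v).map (· + m) = gaussianReal m v := by
      rw [gaussianReal_map_add_const m, zero_add]
    have him : ∫ x, x ∂(Measure.map (fun x => x + m) (gaussianReal 0 v))
        = ∫ x, (x + m) ∂(gaussianReal 0 v) :=
      integral_map (measurable_add_const m).aemeasurable aestronglyMeasurable_id
    have hmap' : Measure.map (fun x => x + m) (gaussianReal 0 v) = gaussianReal m v := hmap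
    rw [← hmap', him, integral_add (integrable_id_gaussian0 hv) (integrable_const m),
      integral_id_gaussian0, integral_const]
    simp

lemma integral_sq_gaussian (v : NNReal) : ∫ x, x ^ 2 ∂(gaussianReal 0 v) = v := by
  by_cases hv : v = 0
  · rw [hv, gaussianReal_zero_var, integral_dirac]
    simp
  · have hvpos : (0:ℝ) < v := lt_of_le_of_ne v.coe_nonneg (Ne.symm (NNReal.coe_ne_zero.mpr hv))
    have hb : (0:ℝ) < (2 * (v:ℝ))⁻¹ := by positivity
    rw [my_integral_gaussianReal hv]
    have heq : (fun x : ℝ => gaussianPDFReal 0 v x * x ^ 2)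
        = fun x : ℝ => (Real.sqrt (2 * π * v))⁻¹ * (x ^ 2 * Real.exp (-(2 * (v:ℝ))⁻¹ * x ^ 2)) := by
      funext x; rw [pdfReal_zero_eq]; ring
    rw [heq, integral_const_mul, integral_sq_exp hb]
    have hπ : π / (2 * (v:ℝ))⁻¹ = 2 * π * v := by field_simp
    rw [hπ]
    have hs : Real.sqrt (2 * π * v) ≠ 0 := by
      refine ne_of_gt (Real.sqrt_pos.mpr ?_)
      have := Real.pi_pos; positivity
    field_simp

/-! ### Gaussian tail bounds -/

lemma ennreal_half_of_add_self {a : ℝ≥0∞} (h : a + a = 1) : a = 2⁻¹ := by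
  have h2 : (2:ℝ≥0∞) * a = 1 := by rw [two_mul, h]
  calc a = 2⁻¹ * (2 * a) := by
        rw [← mul_assoc, ENNReal.inv_mul_cancel two_ne_zero (by norm_num), one_mul]
    _ = 2⁻¹ := by rw [h2, mul_one]

lemma gaussian_half {v : NNReal} (hv : v ≠ 0) (m : ℝ) :
    gaussianReal m v (Ici m) = 2⁻¹ := by
  have hmap : (gaussianReal 0 v).map (· + m) = gaussianReal m v := by
    rw [gaussianReal_map_add_const m, zero_add]
  have h1 : gaussianReal m v (Ici m) = gaussianReal 0 v (Ici 0) := by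
    rw [← hmap, Measure.map_apply (measurable_add_const m) measurableSet_Ici]
    congr 1
    ext x; simp
  rw [h1]
  have hneg : gaussianReal 0 v (Iio 0) = gaussianReal 0 v (Ioi 0) := by
    conv_lhs => rw [← gaussian0_neg_invariant (v := v)]
    rw [Measure.map_apply (measurable_const_mul _) measurableSet_Iio]
    congr 1
    ext x; simp
  have hzero : gaussianReal 0 v ({0} : Set ℝ) = 0 :=
    gaussianReal_absolutelyContinuous 0 hv (Real.volume_singleton)
  have hIci : gaussianReal 0 v (Ici 0) = gaussianReal 0 v (Ioi 0) := by
    have heq : (Ici (0:ℝ)) = {0} ∪ Ioi 0 := by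
      ext x; simp [le_iff_lt_or_eq, eq_comm]
    rw [heq]
    refine le_antisymm ((measure_union_le _ _).trans ?_) (measure_mono subset_union_right)
    rw [hzero, zero_add]
  have huniv : gaussianReal 0 v (Iio 0) + gaussianReal 0 v (Ici 0) = 1 := by
    rw [← measure_union (Iio_disjoint_Ici le_rfl) measurableSet_Ici, Iio_union_Ici,
      measure_univ]
  apply ennreal_half_of_add_self
  rw [← huniv, hneg, hIci]

lemma ennreal_ofreal_half : ENNReal.ofReal (1/2 : ℝ) = 2⁻¹ := by
  rw [ENNReal.ofReal_div_of_pos (by norm_num)]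
  norm_num

lemma gaussian_tail_Ici {v : NNReal} {σ c : ℝ} (hσ : 0 < σ) (hvσ : (v:ℝ) ≤ σ^2) (hc : 0 < c) :
    gaussianReal 0 v (Ici c) ≤ ENNReal.ofReal (Real.exp (-c^2/(2*σ^2)) * (1/2)) := by
  by_cases hv : v = 0
  · rw [hv, gaussianReal_zero_var, Measure.dirac_apply' _ measurableSet_Ici]
    rw [Set.indicator_of_notMem (by simp [hc.le]; linarith)]
    exact zero_le
  · have hvpos : (0:ℝ) < v := lt_of_le_of_ne v.coe_nonneg (Ne.symm (NNReal.coe_ne_zero.mpr hv))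
    have key : gaussianReal 0 v (Ici c)
        ≤ ENNReal.ofReal (Real.exp (-c^2/(2*(v:ℝ)))) * gaussianReal c v (Ici c) := by
      rw [gaussianReal_apply 0 hv, gaussianReal_apply c hv,
        ← lintegral_const_mul _ (measurable_gaussianPDF c v)]
      refine setLIntegral_mono ((measurable_gaussianPDF c v).const_mul _) ?_
      intro x hx
      rw [gaussianPDF_def, gaussianPDF_def, ← ENNReal.ofReal_mul (Real.exp_nonneg _)]
      refine ENNReal.ofReal_le_ofReal ?_
      have hxc : c ≤ x := hx
      have hee : Real.exp (-(x - 0)^2/(2*(v:ℝ)))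
          ≤ Real.exp (-c^2/(2*(v:ℝ))) * Real.exp (-(x - c)^2/(2*(v:ℝ))) := by
        rw [← Real.exp_add]
        refine Real.exp_le_exp.mpr ?_
        rw [← add_div]
        rw [div_le_div_iff₀ (by positivity) (by positivity)]
        nlinarith [mul_nonneg (mul_nonneg hc.le (sub_nonneg.mpr hxc)) hvpos.le]
      have step : ∀ C : ℝ, 0 ≤ C →
          C * Real.exp (-(x - 0)^2/(2*(v:ℝ)))
          ≤ Real.exp (-c^2/(2*(v:ℝ))) * (C * Real.exp (-(x - c)^2/(2*(v:ℝ)))) := by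
        intro C hC
        calc C * Real.exp (-(x - 0)^2/(2*(v:ℝ)))
            ≤ C * (Real.exp (-c^2/(2*(v:ℝ))) * Real.exp (-(x - c)^2/(2*(v:ℝ)))) :=
              mul_le_mul_of_nonneg_left hee hC
          _ = Real.exp (-c^2/(2*(v:ℝ))) * (C * Real.exp (-(x - c)^2/(2*(v:ℝ)))) := by ring
      simp only [gaussianPDFReal]
      exact step _ (by positivity)
    rw [gaussian_half hv c] at key
    refine key.trans ?_
    rw [ENNReal.ofReal_mul (Real.exp_nonneg _), ennreal_ofreal_half]
    refine mul_le_mul_left (ENNReal.ofReal_le_ofReal (Real.exp_le_exp.mpr ?_)) _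
    rw [neg_div, neg_div, neg_le_neg_iff]
    refine div_le_div_of_nonneg_left (sq_nonneg c) (by positivity) (by nlinarith)

lemma gaussian_tail_Iic {v : NNReal} {σ c : ℝ} (hσ : 0 < σ) (hvσ : (v:ℝ) ≤ σ^2) (hc : 0 < c) :
    gaussianReal 0 v (Iic (-c)) ≤ ENNReal.ofReal (Real.exp (-c^2/(2*σ^2)) * (1/2)) := by
  have h1 : gaussianReal 0 v (Iic (-c)) = gaussianReal 0 v (Ici c) := by
    conv_lhs => rw [← gaussian0_neg_invariant (v := v)]
    rw [Measure.map_apply (measurable_const_mul _) measurableSet_Iic]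
    congr 1
    ext x
    simp only [mem_preimage, mem_Iic, mem_Ici]
    constructor <;> intro h <;> linarith
  rw [h1]
  exact gaussian_tail_Ici hσ hvσ hc

/-! ### Increasing events -/

lemma mem_of_le_on {n : ℕ} {A : Set (Fin n → ℝ)} {I : Set (Fin n)}
    (hInc : IncreasingEvent A) (hSupp : SupportedOn A I)
    {x w : Fin n → ℝ} (hx : x ∈ A) (hle : ∀ i ∈ I, x i ≤ w i) : w ∈ A := by
  have hv : x + (fun i => max (w i - x i) 0) ∈ A :=
    hInc x hx _ (fun i => le_max_right _ _)
  refine (hSupp _ w ?_).mp hv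
  intro i hi
  have := hle i hi
  simp only [Pi.add_apply]
  rw [max_eq_left (by linarith)]
  ring

lemma increasingEvent_interior {n : ℕ} {A : Set (Fin n → ℝ)}
    (hInc : IncreasingEvent A) : IncreasingEvent (interior A) := by
  intro x hx v hv
  obtain ⟨U, hUA, hUo, hxU⟩ := mem_interior.mp hx
  refine mem_interior.mpr ⟨(fun z => z - v) ⁻¹' U, ?_, hUo.preimage (by continuity), ?_⟩
  · intro z hz
    have : (z - v) + v ∈ A := hInc _ (hUA hz) v hv
    simpa using this
  · simp only [mem_preimage, add_sub_cancel_right]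
    exact hxU

lemma supportedOn_interior {n : ℕ} {A : Set (Fin n → ℝ)} {I : Set (Fin n)}
    (hSupp : SupportedOn A I) : SupportedOn (interior A) I := by
  classical
  have key : ∀ x y : Fin n → ℝ, (∀ i ∈ I, x i = y i) → x ∈ interior A → y ∈ interior A := by
    intro x y hxy hx
    obtain ⟨U, hUA, hUo, hxU⟩ := mem_interior.mp hx
    set φ : (Fin n → ℝ) → (Fin n → ℝ) := fun z i => if i ∈ I then z i else x i with hφ
    have hφc : Continuous φ := by
      refine continuous_pi fun i => ?_
      by_cases hi : i ∈ I
      · simpa [hφ, hi] using (continuous_apply i)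
      · simpa [hφ, hi] using continuous_const
    refine mem_interior.mpr ⟨φ ⁻¹' U, ?_, hUo.preimage hφc, ?_⟩
    · intro z hz
      refine (hSupp (φ z) z ?_).mp (hUA hz)
      intro i hi
      simp [hφ, hi]
    · have : φ y = x := by
        funext i
        by_cases hi : i ∈ I
        · simp [hφ, hi, (hxy i hi).symm]
        · simp [hφ, hi]
      simp only [mem_preimage, this]
      exact hxU
  intro x y hxy
  exact ⟨key x y hxy, key y x (fun i hi => (hxy i hi).symm)⟩

lemma shift_mem_interior {n : ℕ} {A : Set (Fin n → ℝ)}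
    (hInc : IncreasingEvent A) {x : Fin n → ℝ} (hx : x ∈ A) {δ : ℝ} (hδ : 0 < δ) :
    (x + fun _ => δ) ∈ interior A := by
  set w : Fin n → ℝ := x + fun _ => δ with hw
  refine mem_interior.mpr ⟨Metric.ball w δ, ?_, Metric.isOpen_ball,
    Metric.mem_ball_self hδ⟩
  intro z hz
  have hcoord : ∀ i, x i ≤ z i := by
    intro i
    have h1 : dist (z i) (w i) ≤ dist z w := dist_le_pi_dist z w i
    have h2 : dist (z i) (w i) < δ := lt_of_le_of_lt h1 hz
    have hwi : w i = x i + δ := rfl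
    rw [hwi, Real.dist_eq, abs_lt] at h2
    linarith [h2.1]
  have : x + (z - x) ∈ A := hInc x hx _ (fun i => by simpa using hcoord i)
  simpa using this

/-! ### Random vector lemmas -/

variable {Ω : Type*} [MeasureSpace Ω] {n : ℕ}

lemma coord_aemeasurable [IsProbabilityMeasure (ℙ : Measure Ω)]
    {X : Ω → Fin n → ℝ} (hX : IsGaussianVector X) (i : Fin n) :
    AEMeasurable (fun ω => X ω i) ℙ := by
  obtain ⟨m, v, hmap⟩ := hX (Pi.single i 1)
  have heq : (fun ω => ∑ j, (Pi.single i 1 : Fin n → ℝ) j * X ω j) = fun ω => X ω i := by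
    funext ω
    simp [Pi.single_apply, ite_mul, Finset.sum_ite_eq']
  rw [heq] at hmap
  exact aemeasurable_of_map_neZero (by rw [hmap]; infer_instance)

lemma coord_map [IsProbabilityMeasure (ℙ : Measure Ω)]
    {X : Ω → Fin n → ℝ} (hX : IsGaussianVector X) (i : Fin n) :
    ∃ (m : ℝ) (v : NNReal), Measure.map (fun ω => X ω i) ℙ = gaussianReal m v := by
  obtain ⟨m, v, hmap⟩ := hX (Pi.single i 1)
  have heq : (fun ω => ∑ j, (Pi.single i 1 : Fin n → ℝ) j * X ω j) = fun ω => X ω i := by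
    funext ω
    simp [Pi.single_apply, ite_mul, Finset.sum_ite_eq']
  rw [heq] at hmap
  exact ⟨m, v, hmap⟩

lemma aemeasurable_pi_of_coords {X : Ω → Fin n → ℝ}
    (h : ∀ i, AEMeasurable (fun ω => X ω i) ℙ) : AEMeasurable X ℙ := by
  classical
  refine ⟨fun ω i => (h i).mk _ ω, measurable_pi_iff.mpr fun i => (h i).measurable_mk, ?_⟩
  have hall : ∀ᵐ ω ∂ℙ, ∀ i, X ω i = (h i).mk _ ω := ae_all_iff.mpr fun i => (h i).ae_eq_mk
  filter_upwards [hall] with ω hω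
  funext i
  exact hω i

/-! ### Shifts and extensions -/

def sh {n : ℕ} (t : ℝ) : (Fin n → ℝ) → (Fin n → ℝ) := fun x i => x i + t

lemma measurable_sh {n : ℕ} (t : ℝ) : Measurable (sh (n := n) t) :=
  measurable_pi_lambda _ (fun i => by exact (show Measurable fun x : Fin n → ℝ => x i from measurable_pi_apply i).add_const t)

def ext' {n : ℕ} (I : Finset (Fin n)) : (↑I → ℝ) → (Fin n → ℝ) := fun y i =>
  if h : i ∈ I then y ⟨i, h⟩ else 0

lemma measurable_ext' {n : ℕ} (I : Finset (Fin n)) : Measurable (ext' I) := by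
  refine measurable_pi_lambda _ (fun i => ?_)
  by_cases hi : i ∈ I
  · simp only [ext', dif_pos hi]
    exact measurable_pi_apply _
  · simp only [ext', dif_neg hi]
    exact measurable_const

end Stmt11Aux

open Stmt11Aux Set Filter Topology
open scoped ENNReal NNReal

set_option maxHeartbeats 2000000 in
theorem stmt11 {n : ℕ} {Ω : Type*} [MeasureSpace Ω]
    [IsProbabilityMeasure (ℙ : Measure Ω)]
    (X X1 X2 : Ω → Fin n → ℝ)
    (hX : IsGaussianVector X) (hX1 : IsGaussianVector X1) (hX2 : IsGaussianVector X2)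
    (hdecomp : Measure.map X ℙ = Measure.map (fun ω => X1 ω + X2 ω) ℙ)
    (I1 I2 : Finset (Fin n))
    (hindep : IndepFun (fun ω (i : I1) => X1 ω i) (fun ω (i : I2) => X1 ω i) ℙ)
    (hcentred : ∀ i, ∫ ω, X2 ω i ∂ℙ = 0)
    (σ : ℝ) (hσ : 0 < σ)
    (hvar : ∀ i ∈ I1 ∪ I2, ∫ ω, (X2 ω i) ^ 2 ∂ℙ ≤ σ ^ 2)
    (A1 A2 : Set (Fin n → ℝ))
    (hInc1 : IncreasingEvent A1) (hInc2 : IncreasingEvent A2)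
    (hSupp1 : SupportedOn A1 ↑I1) (hSupp2 : SupportedOn A2 ↑I2)
    (ε : ℝ) (hε : 0 < ε) :
    (ℙ {ω | X ω ∈ A1 ∩ A2}).toReal -
        (ℙ {ω | (fun i => X ω i + ε) ∈ A1}).toReal *
          (ℙ {ω | (fun i => X ω i + ε) ∈ A2}).toReal ≤
      3 * max (I1.card : ℝ) (I2.card : ℝ) * Real.exp (-ε ^ 2 / (8 * σ ^ 2)) := by
  classical
  set M : ℝ := max (I1.card : ℝ) (I2.card : ℝ) with hM
  have hM0 : 0 ≤ M := le_max_of_le_left (Nat.cast_nonneg _)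
  -- coordinate tail bound for X2
  have coordfacts : ∀ i ∈ I1 ∪ I2, ∃ v : NNReal,
      Measure.map (fun ω => X2 ω i) ℙ = gaussianReal 0 v ∧ (v:ℝ) ≤ σ^2 := by
    intro i hi
    obtain ⟨m, v, hmap⟩ := coord_map hX2 i
    have ham : AEMeasurable (fun ω => X2 ω i) ℙ := coord_aemeasurable hX2 i
    have hint : ∫ x, x ∂(Measure.map (fun ω => X2 ω i) ℙ) = ∫ ω, X2 ω i ∂ℙ :=
      integral_map ham aestronglyMeasurable_id
    rw [hmap, integral_id_gaussian, hcentred i] at hint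
    subst hint
    refine ⟨v, hmap, ?_⟩
    have hint2 : ∫ x, x^2 ∂(Measure.map (fun ω => X2 ω i) ℙ) = ∫ ω, (X2 ω i)^2 ∂ℙ :=
      integral_map ham (continuous_pow 2).aestronglyMeasurable
    rw [hmap, integral_sq_gaussian] at hint2
    rw [hint2]
    exact hvar i hi
  have tail_gt : ∀ c : ℝ, 0 < c → ∀ i ∈ I1 ∪ I2,
      ℙ {ω | c < X2 ω i} ≤ ENNReal.ofReal (Real.exp (-c^2/(2*σ^2)) * (1/2)) := by
    intro c hc i hi
    obtain ⟨v, hmap, hvle⟩ := coordfacts i hi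
    have ham : AEMeasurable (fun ω => X2 ω i) ℙ := coord_aemeasurable hX2 i
    have hset : {ω | c < X2 ω i} = (fun ω => X2 ω i) ⁻¹' (Ioi c) := rfl
    rw [hset, ← Measure.map_apply_of_aemeasurable ham measurableSet_Ioi, hmap]
    exact (measure_mono Ioi_subset_Ici_self).trans (gaussian_tail_Ici hσ hvle hc)
  have tail_lt : ∀ c : ℝ, 0 < c → ∀ i ∈ I1 ∪ I2,
      ℙ {ω | X2 ω i < -c} ≤ ENNReal.ofReal (Real.exp (-c^2/(2*σ^2)) * (1/2)) := by
    intro c hc i hi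
    obtain ⟨v, hmap, hvle⟩ := coordfacts i hi
    have ham : AEMeasurable (fun ω => X2 ω i) ℙ := coord_aemeasurable hX2 i
    have hset : {ω | X2 ω i < -c} = (fun ω => X2 ω i) ⁻¹' (Iio (-c)) := rfl
    rw [hset, ← Measure.map_apply_of_aemeasurable ham measurableSet_Iio, hmap]
    exact (measure_mono Iio_subset_Iic_self).trans (gaussian_tail_Iic hσ hvle hc)
  -- main δ-parametrized bound
  have main : ∀ δ ∈ Ioo (0:ℝ) ε,
      (ℙ {ω | X ω ∈ A1 ∩ A2}).toReal -
        (ℙ {ω | (fun i => X ω i + ε) ∈ A1}).toReal *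
          (ℙ {ω | (fun i => X ω i + ε) ∈ A2}).toReal ≤
      3 * M * Real.exp (-(ε - δ)^2 / (8 * σ^2)) := by
    rintro δ ⟨hδ0, hδε⟩
    set c : ℝ := (ε - δ)/2 with hcdef
    have hc : 0 < c := by rw [hcdef]; linarith
    have h2c : δ + 2*c = ε := by rw [hcdef]; ring
    set E : ℝ := Real.exp (-c^2/(2*σ^2)) with hEdef
    have hE0 : 0 ≤ E := Real.exp_nonneg _
    -- interiors
    set O1 : Set (Fin n → ℝ) := interior A1 with hO1def
    set O2 : Set (Fin n → ℝ) := interior A2 with hO2def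
    have hIncO1 : IncreasingEvent O1 := increasingEvent_interior hInc1
    have hIncO2 : IncreasingEvent O2 := increasingEvent_interior hInc2
    have hSuppO1 : SupportedOn O1 ↑I1 := supportedOn_interior hSupp1
    have hSuppO2 : SupportedOn O2 ↑I2 := supportedOn_interior hSupp2
    have hO1m : MeasurableSet O1 := isOpen_interior.measurableSet
    have hO2m : MeasurableSet O2 := isOpen_interior.measurableSet
    -- measurability of the random vectors
    have hXm : AEMeasurable X ℙ := aemeasurable_pi_of_coords (coord_aemeasurable hX)
    have hhm : AEMeasurable (fun ω => X1 ω + X2 ω) ℙ :=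
      aemeasurable_pi_of_coords
        (fun i => (coord_aemeasurable hX1 i).add (coord_aemeasurable hX2 i))
    -- sets
    set G : Set (Fin n → ℝ) := sh δ ⁻¹' (O1 ∩ O2) with hGdef
    have hGm : MeasurableSet G := (hO1m.inter hO2m).preimage (measurable_sh δ)
    set G1' : Set (Fin n → ℝ) := sh ε ⁻¹' O1 with hG1def
    set G2' : Set (Fin n → ℝ) := sh ε ⁻¹' O2 with hG2def
    have hG1m : MeasurableSet G1' := hO1m.preimage (measurable_sh ε)
    have hG2m : MeasurableSet G2' := hO2m.preimage (measurable_sh ε)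
    set S1 : Set (↑I1 → ℝ) := (fun y => sh (δ + c) (ext' I1 y)) ⁻¹' O1 with hS1def
    set S2 : Set (↑I2 → ℝ) := (fun y => sh (δ + c) (ext' I2 y)) ⁻¹' O2 with hS2def
    have hS1m : MeasurableSet S1 := hO1m.preimage ((measurable_sh _).comp (measurable_ext' I1))
    have hS2m : MeasurableSet S2 := hO2m.preimage ((measurable_sh _).comp (measurable_ext' I2))
    -- membership translations
    have hfS1 : ∀ ω, (fun ω (i : I1) => X1 ω i) ω ∈ S1 ↔ sh (δ + c) (X1 ω) ∈ O1 := by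
      intro ω
      refine hSuppO1 _ _ ?_
      intro i hi
      have hi' : i ∈ I1 := hi
      simp only [sh, ext', dif_pos hi']
    have hgS2 : ∀ ω, (fun ω (i : I2) => X1 ω i) ω ∈ S2 ↔ sh (δ + c) (X1 ω) ∈ O2 := by
      intro ω
      refine hSuppO2 _ _ ?_
      intro i hi
      have hi' : i ∈ I2 := hi
      simp only [sh, ext', dif_pos hi']
    -- bad events
    set B : Set Ω := ⋃ i ∈ I1 ∪ I2, {ω | c < X2 ω i} with hBdef
    set B1 : Set Ω := ⋃ i ∈ I1, {ω | X2 ω i < -c} with hB1def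
    set B2 : Set Ω := ⋃ i ∈ I2, {ω | X2 ω i < -c} with hB2def
    -- inclusion 1
    have hIncl1 : (fun ω => X1 ω + X2 ω) ⁻¹' G ⊆
        ((fun ω (i : I1) => X1 ω i) ⁻¹' S1 ∩ (fun ω (i : I2) => X1 ω i) ⁻¹' S2) ∪ B := by
      intro ω hω
      by_cases hBc : ∀ i ∈ I1 ∪ I2, X2 ω i ≤ c
      · left
        have hω1 : sh δ (X1 ω + X2 ω) ∈ O1 := hω.1
        have hω2 : sh δ (X1 ω + X2 ω) ∈ O2 := hω.2
        constructor
        · refine (hfS1 ω).mpr (mem_of_le_on hIncO1 hSuppO1 hω1 ?_)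
          intro i hi
          have hi' : i ∈ I1 := hi
          have hx2 := hBc i (Finset.mem_union_left _ hi')
          show (X1 ω + X2 ω) i + δ ≤ X1 ω i + (δ + c)
          simp only [Pi.add_apply]
          linarith
        · refine (hgS2 ω).mpr (mem_of_le_on hIncO2 hSuppO2 hω2 ?_)
          intro i hi
          have hi' : i ∈ I2 := hi
          have hx2 := hBc i (Finset.mem_union_right _ hi')
          show (X1 ω + X2 ω) i + δ ≤ X1 ω i + (δ + c)
          simp only [Pi.add_apply]
          linarith
      · right
        push_neg at hBc
        obtain ⟨i, hi, hci⟩ := hBc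
        exact Set.mem_biUnion hi hci
    -- inclusion 2 (for A1)
    have hIncl2 : (fun ω (i : I1) => X1 ω i) ⁻¹' S1 ⊆
        ((fun ω => X1 ω + X2 ω) ⁻¹' G1') ∪ B1 := by
      intro ω hω
      by_cases hBc : ∀ i ∈ I1, -c ≤ X2 ω i
      · left
        have h1 : sh (δ + c) (X1 ω) ∈ O1 := (hfS1 ω).mp hω
        refine mem_of_le_on hIncO1 hSuppO1 h1 ?_
        intro i hi
        have hi' : i ∈ I1 := hi
        have hx2 := hBc i hi'
        show X1 ω i + (δ + c) ≤ (X1 ω + X2 ω) i + ε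
        simp only [Pi.add_apply]
        linarith
      · right
        push_neg at hBc
        obtain ⟨i, hi, hci⟩ := hBc
        exact Set.mem_biUnion hi hci
    -- inclusion 2 (for A2)
    have hIncl3 : (fun ω (i : I2) => X1 ω i) ⁻¹' S2 ⊆
        ((fun ω => X1 ω + X2 ω) ⁻¹' G2') ∪ B2 := by
      intro ω hω
      by_cases hBc : ∀ i ∈ I2, -c ≤ X2 ω i
      · left
        have h1 : sh (δ + c) (X1 ω) ∈ O2 := (hgS2 ω).mp hω
        refine mem_of_le_on hIncO2 hSuppO2 h1 ?_
        intro i hi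
        have hi' : i ∈ I2 := hi
        have hx2 := hBc i hi'
        show X1 ω i + (δ + c) ≤ (X1 ω + X2 ω) i + ε
        simp only [Pi.add_apply]
        linarith
      · right
        push_neg at hBc
        obtain ⟨i, hi, hci⟩ := hBc
        exact Set.mem_biUnion hi hci
    -- step 0 : A1 ∩ A2 lands in G after the δ-shift
    have hStep0 : X ⁻¹' (A1 ∩ A2) ⊆ X ⁻¹' G := by
      refine Set.preimage_mono ?_
      intro x hx
      exact ⟨shift_mem_interior hInc1 hx.1 hδ0, shift_mem_interior hInc2 hx.2 hδ0⟩
    have hG1A : X ⁻¹' G1' ⊆ {ω | (fun i => X ω i + ε) ∈ A1} := by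
      intro ω hω
      exact (interior_subset : interior A1 ⊆ A1) hω
    have hG2A : X ⁻¹' G2' ⊆ {ω | (fun i => X ω i + ε) ∈ A2} := by
      intro ω hω
      exact (interior_subset : interior A2 ⊆ A2) hω
    -- identify laws
    have hmapEq : ∀ (s : Set (Fin n → ℝ)), MeasurableSet s →
        ℙ (X ⁻¹' s) = ℙ ((fun ω => X1 ω + X2 ω) ⁻¹' s) := by
      intro s hs
      rw [← Measure.map_apply_of_aemeasurable hXm hs, hdecomp,
        Measure.map_apply_of_aemeasurable hhm hs]
    -- ENNReal-level estimates
    have e1 : ℙ {ω | X ω ∈ A1 ∩ A2}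
        ≤ ℙ ((fun ω (i : I1) => X1 ω i) ⁻¹' S1) * ℙ ((fun ω (i : I2) => X1 ω i) ⁻¹' S2)
          + ℙ B := by
      calc ℙ {ω | X ω ∈ A1 ∩ A2} ≤ ℙ (X ⁻¹' G) := measure_mono hStep0
        _ = ℙ ((fun ω => X1 ω + X2 ω) ⁻¹' G) := hmapEq G hGm
        _ ≤ ℙ (((fun ω (i : I1) => X1 ω i) ⁻¹' S1 ∩ (fun ω (i : I2) => X1 ω i) ⁻¹' S2) ∪ B) :=
            measure_mono hIncl1
        _ ≤ ℙ ((fun ω (i : I1) => X1 ω i) ⁻¹' S1 ∩ (fun ω (i : I2) => X1 ω i) ⁻¹' S2) + ℙ B :=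
            measure_union_le _ _
        _ = _ := by rw [hindep.measure_inter_preimage_eq_mul _ _ hS1m hS2m]
    have e2 : ℙ ((fun ω (i : I1) => X1 ω i) ⁻¹' S1)
        ≤ ℙ {ω | (fun i => X ω i + ε) ∈ A1} + ℙ B1 := by
      calc ℙ ((fun ω (i : I1) => X1 ω i) ⁻¹' S1)
          ≤ ℙ (((fun ω => X1 ω + X2 ω) ⁻¹' G1') ∪ B1) := measure_mono hIncl2
        _ ≤ ℙ ((fun ω => X1 ω + X2 ω) ⁻¹' G1') + ℙ B1 := measure_union_le _ _
        _ = ℙ (X ⁻¹' G1') + ℙ B1 := by rw [← hmapEq G1' hG1m]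
        _ ≤ _ := add_le_add_left (measure_mono hG1A) _
    have e3 : ℙ ((fun ω (i : I2) => X1 ω i) ⁻¹' S2)
        ≤ ℙ {ω | (fun i => X ω i + ε) ∈ A2} + ℙ B2 := by
      calc ℙ ((fun ω (i : I2) => X1 ω i) ⁻¹' S2)
          ≤ ℙ (((fun ω => X1 ω + X2 ω) ⁻¹' G2') ∪ B2) := measure_mono hIncl3
        _ ≤ ℙ ((fun ω => X1 ω + X2 ω) ⁻¹' G2') + ℙ B2 := measure_union_le _ _
        _ = ℙ (X ⁻¹' G2') + ℙ B2 := by rw [← hmapEq G2' hG2m]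
        _ ≤ _ := add_le_add_left (measure_mono hG2A) _
    -- tail estimates
    have hEB : ℙ B ≤ (((I1 ∪ I2).card : ℕ) : ℝ≥0∞) * ENNReal.ofReal (E * (1/2)) := by
      calc ℙ B ≤ ∑ i ∈ I1 ∪ I2, ℙ {ω | c < X2 ω i} := measure_biUnion_finset_le _ _
        _ ≤ ∑ _i ∈ I1 ∪ I2, ENNReal.ofReal (E * (1/2)) :=
            Finset.sum_le_sum (fun i hi => tail_gt c hc i hi)
        _ = _ := by rw [Finset.sum_const, nsmul_eq_mul]
    have hEB1 : ℙ B1 ≤ ((I1.card : ℕ) : ℝ≥0∞) * ENNReal.ofReal (E * (1/2)) := by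
      calc ℙ B1 ≤ ∑ i ∈ I1, ℙ {ω | X2 ω i < -c} := measure_biUnion_finset_le _ _
        _ ≤ ∑ _i ∈ I1, ENNReal.ofReal (E * (1/2)) :=
            Finset.sum_le_sum (fun i hi => tail_lt c hc i (Finset.mem_union_left _ hi))
        _ = _ := by rw [Finset.sum_const, nsmul_eq_mul]
    have hEB2 : ℙ B2 ≤ ((I2.card : ℕ) : ℝ≥0∞) * ENNReal.ofReal (E * (1/2)) := by
      calc ℙ B2 ≤ ∑ i ∈ I2, ℙ {ω | X2 ω i < -c} := measure_biUnion_finset_le _ _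
        _ ≤ ∑ _i ∈ I2, ENNReal.ofReal (E * (1/2)) :=
            Finset.sum_le_sum (fun i hi => tail_lt c hc i (Finset.mem_union_right _ hi))
        _ = _ := by rw [Finset.sum_const, nsmul_eq_mul]
    -- translate everything to the reals
    have fin1 : ℙ ((fun ω (i : I1) => X1 ω i) ⁻¹' S1) ≠ ⊤ := measure_ne_top _ _
    have fin2 : ℙ ((fun ω (i : I2) => X1 ω i) ⁻¹' S2) ≠ ⊤ := measure_ne_top _ _
    set p1 : ℝ := (ℙ ((fun ω (i : I1) => X1 ω i) ⁻¹' S1)).toReal with hp1def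
    set p2 : ℝ := (ℙ ((fun ω (i : I2) => X1 ω i) ⁻¹' S2)).toReal with hp2def
    set q1 : ℝ := (ℙ {ω | (fun i => X ω i + ε) ∈ A1}).toReal with hq1def
    set q2 : ℝ := (ℙ {ω | (fun i => X ω i + ε) ∈ A2}).toReal with hq2def
    set b : ℝ := (ℙ B).toReal with hbdef
    set b1 : ℝ := (ℙ B1).toReal with hb1def
    set b2 : ℝ := (ℙ B2).toReal with hb2def
    have toReal_le_one : ∀ s : Set Ω, (ℙ s).toReal ≤ 1 := fun s => by
      simpa using ENNReal.toReal_mono (by norm_num) (prob_le_one (μ := (ℙ : Measure Ω)) (s := s))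
    have rP : (ℙ {ω | X ω ∈ A1 ∩ A2}).toReal ≤ p1 * p2 + b := by
      have hfin : ℙ ((fun ω (i : I1) => X1 ω i) ⁻¹' S1) * ℙ ((fun ω (i : I2) => X1 ω i) ⁻¹' S2)
          + ℙ B ≠ ⊤ :=
        ENNReal.add_ne_top.mpr ⟨ENNReal.mul_ne_top fin1 fin2, measure_ne_top _ _⟩
      have := ENNReal.toReal_mono hfin e1
      rwa [ENNReal.toReal_add (ENNReal.mul_ne_top fin1 fin2) (measure_ne_top _ _),
        ENNReal.toReal_mul] at this
    have rp1 : p1 ≤ q1 + b1 := by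
      have hfin : ℙ {ω | (fun i => X ω i + ε) ∈ A1} + ℙ B1 ≠ ⊤ :=
        ENNReal.add_ne_top.mpr ⟨measure_ne_top _ _, measure_ne_top _ _⟩
      have := ENNReal.toReal_mono hfin e2
      rwa [ENNReal.toReal_add (measure_ne_top _ _) (measure_ne_top _ _)] at this
    have rp2 : p2 ≤ q2 + b2 := by
      have hfin : ℙ {ω | (fun i => X ω i + ε) ∈ A2} + ℙ B2 ≠ ⊤ :=
        ENNReal.add_ne_top.mpr ⟨measure_ne_top _ _, measure_ne_top _ _⟩
      have := ENNReal.toReal_mono hfin e3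
      rwa [ENNReal.toReal_add (measure_ne_top _ _) (measure_ne_top _ _)] at this
    have rcast : ∀ (k : ℕ), ((((k : ℕ) : ℝ≥0∞)) * ENNReal.ofReal (E * (1/2))).toReal
        = (k : ℝ) * (E * (1/2)) := by
      intro k
      rw [ENNReal.toReal_mul, ENNReal.toReal_natCast, ENNReal.toReal_ofReal (by positivity)]
    have rb : b ≤ ((I1 ∪ I2).card : ℝ) * (E * (1/2)) := by
      have := ENNReal.toReal_mono (by simp [ENNReal.mul_ne_top]) hEB
      rwa [rcast] at this
    have rb1 : b1 ≤ (I1.card : ℝ) * (E * (1/2)) := by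
      have := ENNReal.toReal_mono (by simp [ENNReal.mul_ne_top]) hEB1
      rwa [rcast] at this
    have rb2 : b2 ≤ (I2.card : ℝ) * (E * (1/2)) := by
      have := ENNReal.toReal_mono (by simp [ENNReal.mul_ne_top]) hEB2
      rwa [rcast] at this
    -- cardinality facts
    have hcard : ((I1 ∪ I2).card : ℝ) ≤ (I1.card : ℝ) + (I2.card : ℝ) := by
      exact_mod_cast Finset.card_union_le I1 I2
    have hc1M : (I1.card : ℝ) ≤ M := le_max_left _ _
    have hc2M : (I2.card : ℝ) ≤ M := le_max_right _ _
    -- elementary bounds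
    have hp1n : 0 ≤ p1 := ENNReal.toReal_nonneg
    have hp2n : 0 ≤ p2 := ENNReal.toReal_nonneg
    have hq1n : 0 ≤ q1 := ENNReal.toReal_nonneg
    have hq2n : 0 ≤ q2 := ENNReal.toReal_nonneg
    have hb1n : 0 ≤ b1 := ENNReal.toReal_nonneg
    have hb2n : 0 ≤ b2 := ENNReal.toReal_nonneg
    have hbn : 0 ≤ b := ENNReal.toReal_nonneg
    have hp2o : p2 ≤ 1 := toReal_le_one _
    have hq1o : q1 ≤ 1 := toReal_le_one _
    clear_value p1 p2 q1 q2 b b1 b2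
    -- combine
    have key : p1 * p2 ≤ q1 * q2 + b1 + b2 := by
      have h1 : p1 * p2 ≤ (q1 + b1) * p2 := mul_le_mul_of_nonneg_right rp1 hp2n
      have h2 : q1 * p2 ≤ q1 * (q2 + b2) := mul_le_mul_of_nonneg_left rp2 hq1n
      have h3 : b1 * p2 ≤ b1 := by
        calc b1 * p2 ≤ b1 * 1 := mul_le_mul_of_nonneg_left hp2o hb1n
          _ = b1 := mul_one b1
      have h4 : q1 * b2 ≤ b2 := by
        calc q1 * b2 ≤ 1 * b2 := mul_le_mul_of_nonneg_right hq1o hb2n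
          _ = b2 := one_mul b2
      nlinarith
    have hEeq : E = Real.exp (-(ε - δ)^2 / (8 * σ^2)) := by
      rw [hEdef, hcdef]
      congr 1
      field_simp
      ring
    have final : (ℙ {ω | X ω ∈ A1 ∩ A2}).toReal - q1 * q2 ≤ 3 * M * E := by
      have hsum : b + b1 + b2 ≤ 2 * M * E := by
        have hu : ((I1 ∪ I2).card : ℝ) * (E * (1/2)) ≤ (M + M) * (E * (1/2)) := by
          refine mul_le_mul_of_nonneg_right ?_ (by positivity)
          linarith
        have e1' : (I1.card : ℝ) * (E * (1/2)) ≤ M * (E * (1/2)) :=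
          mul_le_mul_of_nonneg_right hc1M (by positivity)
        have e2' : (I2.card : ℝ) * (E * (1/2)) ≤ M * (E * (1/2)) :=
          mul_le_mul_of_nonneg_right hc2M (by positivity)
        have hprod : (M + M) * (E * (1/2)) + M * (E * (1/2)) + M * (E * (1/2)) = 2 * M * E := by
          ring
        linarith
      have hME : 0 ≤ M * E := mul_nonneg hM0 hE0
      have h23 : 2 * M * E ≤ 3 * M * E := by nlinarith
      linarith
    rw [hEeq] at final
    exact final
  -- pass to the limit δ → 0⁺
  have hcont : Continuous (fun δ : ℝ => 3 * M * Real.exp (-(ε - δ)^2 / (8 * σ^2))) := by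
    have h8 : (8 : ℝ) * σ^2 ≠ 0 := by positivity
    fun_prop (disch := assumption)
  have hlim : Tendsto (fun δ : ℝ => 3 * M * Real.exp (-(ε - δ)^2 / (8 * σ^2))) (𝓝[>] (0:ℝ))
      (𝓝 (3 * M * Real.exp (-ε^2 / (8 * σ^2)))) := by
    have := hcont.tendsto 0
    simp only [sub_zero] at this
    exact this.mono_left nhdsWithin_le_nhds
  refine ge_of_tendsto hlim ?_
  filter_upwards [Ioo_mem_nhdsGT_of_mem (show (0:ℝ) ∈ Ico (0:ℝ) ε from ⟨le_refl _, hε⟩)] with δ hδ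
  exact main δ hδ
end

section
/- For a Gaussian vector $X$ with covariance $K$ and reproducing kernel Hilbert space $H$, the capacity satisfies the duality $\mathrm{Cap}(I) := (\inf_{\mu \in \mathcal{P}(I)}\sum_{i,j \in I}\mu(i)K(i,j)\mu(j))^{-1} = \inf\{\|h\|_H^2 : h \in H, \ h(i) \ge 1 \text{ for all } i \in I\}$, where $\mathcal{P}(I)$ is the set of probability measures on the finite set $I$. -/
open MeasureTheory ProbabilityTheory
open scoped ENNReal

section StmtAux


set_option linter.unusedSectionVars false


private lemma integrable_sq_gaussianKernel {b : ℝ} (hb : 0 < b) :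
    Integrable (fun x : ℝ => x ^ 2 * Real.exp (-b * x ^ 2)) := by
  simpa [Real.rpow_two] using integrable_rpow_mul_exp_neg_mul_sq hb (by norm_num : (-1:ℝ) < 2)

private lemma memLp_id_gaussianReal (m : ℝ) (v : NNReal) : MemLp id 2 (gaussianReal m v) := by
  rcases eq_or_ne v 0 with hv | hv
  · subst hv
    rw [gaussianReal_zero_var]
    rw [memLp_two_iff_integrable_sq measurable_id.aestronglyMeasurable]
    exact (integrable_const (m ^ 2)).congr (ae_eq_dirac (fun x : ℝ => x ^ 2)).symm
  · rw [gaussianReal_of_var_ne_zero m hv,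
      memLp_two_iff_integrable_sq measurable_id.aestronglyMeasurable,
      integrable_withDensity_iff (measurable_gaussianPDF m v)
        (Filter.Eventually.of_forall fun x => ENNReal.ofReal_lt_top)]
    have hv0 : (0:ℝ) < (v:ℝ) :=
      lt_of_le_of_ne v.coe_nonneg (by exact_mod_cast (Ne.symm hv))
    set b : ℝ := (2 * (v:ℝ))⁻¹ with hbdef
    have hb : 0 < b := by positivity
    have h1 : Integrable (fun y : ℝ => (y + m) ^ 2 * Real.exp (-b * y ^ 2)) := by
      have heq : (fun y : ℝ => (y + m) ^ 2 * Real.exp (-b * y ^ 2)) =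
          fun y => y ^ 2 * Real.exp (-b * y ^ 2) + (2 * m) * (y * Real.exp (-b * y ^ 2))
            + m ^ 2 * Real.exp (-b * y ^ 2) := funext fun y => by ring
      rw [heq]
      exact ((integrable_sq_gaussianKernel hb).add
        ((integrable_mul_exp_neg_mul_sq hb).const_mul _)).add
        ((integrable_exp_neg_mul_sq hb).const_mul _)
    have h2 : Integrable (fun x : ℝ => x ^ 2 * Real.exp (-b * (x - m) ^ 2)) := by
      have := h1.comp_sub_right m
      simpa using this
    have hrw : ∀ x : ℝ, ((gaussianPDF m v x).toReal : ℝ) =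
        (Real.sqrt (2 * Real.pi * v))⁻¹ * Real.exp (-b * (x - m) ^ 2) := by
      intro x
      rw [gaussianPDF_def]
      simp only [ENNReal.toReal_ofReal (gaussianPDFReal_nonneg m v x)]
      rw [gaussianPDFReal]
      congr 1
      field_simp [hbdef]
      rw [hbdef, div_eq_mul_inv]
    have : (fun x : ℝ => id x ^ 2 * (gaussianPDF m v x).toReal) =
        fun x => (Real.sqrt (2 * Real.pi * v))⁻¹ * (x ^ 2 * Real.exp (-b * (x - m) ^ 2)) :=
      funext fun x => by rw [hrw]; simp; ring
    rw [this]
    exact h2.const_mul _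

variable {Ω : Type*} [MeasureSpace Ω] [IsProbabilityMeasure (ℙ : Measure Ω)]
  {n : ℕ} {X : Ω → Fin n → ℝ}

private lemma memLp_lin (hX : IsGaussianVector X) (a : Fin n → ℝ) :
    MemLp (fun ω => ∑ i, a i * X ω i) 2 ℙ := by
  obtain ⟨m, v, h⟩ := hX a
  have hae : AEMeasurable (fun ω => ∑ i, a i * X ω i) ℙ :=
    aemeasurable_of_map_neZero (by rw [h]; infer_instance)
  have := (memLp_map_measure_iff
      (g := id) (f := fun ω => ∑ i, a i * X ω i) (p := 2)
      (by rw [h]; exact measurable_id.aestronglyMeasurable) hae).mp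
    (by rw [h]; exact memLp_id_gaussianReal m v)
  simpa using this

private lemma memLp_coord (hX : IsGaussianVector X) (i : Fin n) :
    MemLp (fun ω => X ω i) 2 ℙ := by
  have := memLp_lin hX (Pi.single i (1:ℝ))
  have heq : (fun ω => ∑ j, (Pi.single i (1:ℝ) : Fin n → ℝ) j * X ω j) = fun ω => X ω i := by
    funext ω
    simp [Pi.single_apply]
  rwa [heq] at this

private lemma psd_of_gaussian (hX : IsGaussianVector X) (K : Fin n → Fin n → ℝ)
    (hK : ∀ i j, K i j = ∫ ω, X ω i * X ω j ∂ℙ -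
      (∫ ω, X ω i ∂ℙ) * (∫ ω, X ω j ∂ℙ)) (a : Fin n → ℝ) :
    0 ≤ ∑ i, ∑ j, a i * a j * K i j := by
  have hmem : ∀ i, MemLp (fun ω => X ω i) 2 ℙ := memLp_coord hX
  have hint1 : ∀ i : Fin n, Integrable (fun ω => X ω i) ℙ :=
    fun i => (hmem i).integrable one_le_two
  have hint2 : ∀ i j : Fin n, Integrable (fun ω => X ω i * X ω j) ℙ := by
    intro i j
    refine Integrable.mono' (((hmem i).integrable_sq.add (hmem j).integrable_sq).div_const 2)
      ((hmem i).aestronglyMeasurable.mul (hmem j).aestronglyMeasurable)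
      (Filter.Eventually.of_forall fun ω => ?_)
    rw [Real.norm_eq_abs, abs_mul]
    simp only [Pi.add_apply, Pi.div_apply]
    nlinarith [abs_nonneg (X ω i), abs_nonneg (X ω j), sq_abs (X ω i), sq_abs (X ω j),
      sq_nonneg (|X ω i| - |X ω j|)]
  set S : Ω → ℝ := fun ω => ∑ i, a i * X ω i with hS
  have hmemS : MemLp S 2 ℙ := memLp_lin hX a
  have hES : ∫ ω, S ω ∂ℙ = ∑ i, a i * ∫ ω, X ω i ∂ℙ := by
    rw [integral_finset_sum _ (fun i _ => (hint1 i).const_mul (a i))]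
    exact Finset.sum_congr rfl fun i _ => integral_const_mul _ _
  have hES2 : ∫ ω, S ω ^ 2 ∂ℙ = ∑ i, ∑ j, a i * a j * ∫ ω, X ω i * X ω j ∂ℙ := by
    have hexp : ∀ ω, S ω ^ 2 = ∑ i, ∑ j, a i * a j * (X ω i * X ω j) := by
      intro ω
      rw [hS, sq, Finset.sum_mul_sum]
      exact Finset.sum_congr rfl fun i _ => Finset.sum_congr rfl fun j _ => by ring
    simp_rw [hexp]
    rw [integral_finset_sum _ (fun i _ => integrable_finset_sum _
      (fun j _ => ((hint2 i j).const_mul _)))]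
    refine Finset.sum_congr rfl fun i _ => ?_
    rw [integral_finset_sum _ (fun j _ => ((hint2 i j).const_mul _))]
    exact Finset.sum_congr rfl fun j _ => integral_const_mul _ _
  have hvar := variance_nonneg S ℙ
  rw [variance_eq_sub hmemS] at hvar
  have hsq : (∑ i, a i * ∫ ω, X ω i ∂ℙ) ^ 2
      = ∑ i, ∑ j, a i * a j * ((∫ ω, X ω i ∂ℙ) * (∫ ω, X ω j ∂ℙ)) := by
    rw [sq, Finset.sum_mul_sum]
    exact Finset.sum_congr rfl fun i _ => Finset.sum_congr rfl fun j _ => by ring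
  have hgoal : ∑ i, ∑ j, a i * a j * K i j = (∫ ω, S ω ^ 2 ∂ℙ) - (∫ ω, S ω ∂ℙ) ^ 2 := by
    rw [hES2, hES, hsq, ← Finset.sum_sub_distrib]
    refine Finset.sum_congr rfl fun i _ => ?_
    rw [← Finset.sum_sub_distrib]
    refine Finset.sum_congr rfl fun j _ => ?_
    rw [hK i j]; ring
  rw [hgoal]
  simpa [Pi.pow_apply] using hvar


private def QF {n : ℕ} (K : Fin n → Fin n → ℝ) (a : Fin n → ℝ) : ℝ :=
  ∑ i, ∑ j, a i * a j * K i j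

private def BF {n : ℕ} (K : Fin n → Fin n → ℝ) (a b : Fin n → ℝ) : ℝ :=
  ∑ i, ∑ j, a i * b j * K i j

private lemma BF_self {n : ℕ} (K : Fin n → Fin n → ℝ) (a : Fin n → ℝ) :
    BF K a a = QF K a := rfl

private lemma BF_symm {n : ℕ} {K : Fin n → Fin n → ℝ} (hsym : ∀ i j, K i j = K j i)
    (a b : Fin n → ℝ) : BF K a b = BF K b a := by
  rw [BF, BF, Finset.sum_comm]
  refine Finset.sum_congr rfl fun i _ => Finset.sum_congr rfl fun j _ => ?_
  rw [hsym j i]; ring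

private lemma QF_expand {n : ℕ} {K : Fin n → Fin n → ℝ} (hsym : ∀ i j, K i j = K j i)
    (a b : Fin n → ℝ) (t : ℝ) :
    QF K (a + t • b) = QF K a + 2 * t * BF K a b + t ^ 2 * QF K b := by
  have hterm : ∀ i j : Fin n, (a i + t * b i) * (a j + t * b j) * K i j
      = a i * a j * K i j + t * (a i * b j * K i j) + t * (b i * a j * K i j)
        + t ^ 2 * (b i * b j * K i j) := fun i j => by ring
  have hba : BF K b a = BF K a b := BF_symm hsym b a
  rw [QF]
  simp_rw [Pi.add_apply, Pi.smul_apply, smul_eq_mul, hterm, Finset.sum_add_distrib,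
    ← Finset.mul_sum]
  change QF K a + t * BF K a b + t * BF K b a + t ^ 2 * QF K b = _
  rw [hba]; ring

private lemma BF_sq_le {n : ℕ} {K : Fin n → Fin n → ℝ} (hsym : ∀ i j, K i j = K j i)
    (hpsd : ∀ a : Fin n → ℝ, 0 ≤ QF K a) (a b : Fin n → ℝ) :
    (BF K a b) ^ 2 ≤ QF K a * QF K b := by
  have key : ∀ t : ℝ, 0 ≤ QF K b * (t * t) + (2 * BF K a b) * t + QF K a := by
    intro t
    have h := hpsd (a + t • b)
    rw [QF_expand hsym] at h
    nlinarith
  have hd := discrim_le_zero key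
  rw [discrim] at hd
  nlinarith

private theorem core_duality {n : ℕ} (K : Fin n → Fin n → ℝ)
    (hsym : ∀ i j, K i j = K j i)
    (hpsd : ∀ a : Fin n → ℝ, 0 ≤ QF K a) (I : Finset (Fin n)) :
    (sInf {r : ℝ≥0∞ | ∃ μ : Fin n → ℝ, (∀ i, 0 ≤ μ i) ∧ (∀ i ∉ I, μ i = 0) ∧
        (∑ i ∈ I, μ i) = 1 ∧
        r = ENNReal.ofReal (∑ i ∈ I, ∑ j ∈ I, μ i * K i j * μ j)})⁻¹ =
      sInf {r : ℝ≥0∞ | ∃ a : Fin n → ℝ, (∀ i ∈ I, 1 ≤ ∑ j, a j * K j i) ∧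
        r = ENNReal.ofReal (∑ i, ∑ j, a i * a j * K i j)} := by
  rcases I.eq_empty_or_nonempty with hI | ⟨i0, hi0⟩
  · subst hI
    have h1 : {r : ℝ≥0∞ | ∃ μ : Fin n → ℝ, (∀ i, 0 ≤ μ i) ∧
        (∀ i ∉ (∅ : Finset (Fin n)), μ i = 0) ∧ (∑ i ∈ (∅ : Finset (Fin n)), μ i) = 1 ∧
        r = ENNReal.ofReal (∑ i ∈ (∅ : Finset (Fin n)), ∑ j ∈ (∅ : Finset (Fin n)),
          μ i * K i j * μ j)} = ∅ := by
      ext r; simp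
    rw [h1, sInf_empty, ENNReal.inv_top]
    symm
    refine le_antisymm (sInf_le ⟨0, by simp, by simp⟩) zero_le
  · -- setup
    set Sset : Set (Fin n → ℝ) :=
      {μ | (∀ i, 0 ≤ μ i) ∧ (∀ i ∉ I, μ i = 0) ∧ (∑ i ∈ I, μ i) = 1} with hSset
    set f : (Fin n → ℝ) → ℝ := fun μ => ∑ i ∈ I, ∑ j ∈ I, μ i * K i j * μ j with hfdef
    have hfQ : ∀ μ : Fin n → ℝ, (∀ i ∉ I, μ i = 0) → f μ = QF K μ := by
      intro μ h0
      calc f μ = ∑ i ∈ I, ∑ j ∈ I, μ i * μ j * K i j :=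
            Finset.sum_congr rfl fun i _ => Finset.sum_congr rfl fun j _ => by ring
        _ = ∑ i ∈ I, ∑ j, μ i * μ j * K i j :=
            Finset.sum_congr rfl fun i _ =>
              Finset.sum_subset (Finset.subset_univ I)
                (fun j _ hj => by rw [h0 j hj]; ring)
        _ = ∑ i, ∑ j, μ i * μ j * K i j :=
            Finset.sum_subset (Finset.subset_univ I)
              (fun i _ hi => Finset.sum_eq_zero fun j _ => by rw [h0 i hi]; ring)
        _ = QF K μ := rfl
    -- compactness
    have hclosed : IsClosed Sset := by
      have hrw : Sset = (⋂ i, {μ : Fin n → ℝ | 0 ≤ μ i}) ∩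
          ((⋂ i, {μ : Fin n → ℝ | i ∉ I → μ i = 0}) ∩
            {μ : Fin n → ℝ | (∑ i ∈ I, μ i) = 1}) := by
        ext μ; simp [hSset, Set.mem_iInter]
      rw [hrw]
      refine (isClosed_iInter fun i =>
          isClosed_le continuous_const (continuous_apply i)).inter
        (IsClosed.inter (isClosed_iInter fun i => ?_)
          (isClosed_eq (continuous_finset_sum _ fun i _ => continuous_apply i)
            continuous_const))
      by_cases hi : i ∈ I
      · simp only [hi, not_true_eq_false, false_implies, Set.setOf_true]
        exact isClosed_univ
      · simp only [hi, not_false_eq_true, true_implies]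
        exact isClosed_eq (continuous_apply i) continuous_const
    have hbdd : Bornology.IsBounded Sset := by
      refine Metric.isBounded_closedBall (x := (0 : Fin n → ℝ)) (r := 1) |>.subset ?_
      intro μ hμ
      rw [Metric.mem_closedBall, dist_zero_right]
      rw [pi_norm_le_iff_of_nonneg zero_le_one]
      intro i
      rw [Real.norm_eq_abs, abs_le]
      constructor
      · linarith [hμ.1 i]
      · by_cases hi : i ∈ I
        · calc μ i ≤ ∑ j ∈ I, μ j := Finset.single_le_sum (fun j _ => hμ.1 j) hi
            _ = 1 := hμ.2.2
        · rw [hμ.2.1 i hi]; norm_num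
    have hcomp : IsCompact Sset := Metric.isCompact_of_isClosed_isBounded hclosed hbdd
    have hne : Sset.Nonempty := by
      refine ⟨fun j => if j = i0 then 1 else 0, fun i => by positivity, fun i hi => ?_, ?_⟩
      · simp only [ite_eq_right_iff]
        intro h; exact absurd (h ▸ hi0) hi
      · rw [Finset.sum_ite_eq' I i0 (fun _ => (1:ℝ))]
        simp [hi0]
    have hfc : Continuous f := continuous_finset_sum _ fun i _ =>
      continuous_finset_sum _ fun j _ =>
        ((continuous_apply i).mul continuous_const).mul (continuous_apply j)
    obtain ⟨μ0, hμ0S, hmin⟩ := hcomp.exists_isMinOn hne hfc.continuousOn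
    set c : ℝ := f μ0 with hcdef
    have hcQ : QF K μ0 = c := (hfQ μ0 hμ0S.2.1).symm
    have hc0 : 0 ≤ c := hcQ ▸ hpsd μ0
    have hmin' : ∀ μ ∈ Sset, c ≤ f μ := fun μ hμ => isMinOn_iff.mp hmin μ hμ
    -- the value of sInf on the left
    have hsInfL : sInf {r : ℝ≥0∞ | ∃ μ : Fin n → ℝ, (∀ i, 0 ≤ μ i) ∧ (∀ i ∉ I, μ i = 0) ∧
        (∑ i ∈ I, μ i) = 1 ∧ r = ENNReal.ofReal (∑ i ∈ I, ∑ j ∈ I, μ i * K i j * μ j)}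
        = ENNReal.ofReal c := by
      refine le_antisymm (sInf_le ⟨μ0, hμ0S.1, hμ0S.2.1, hμ0S.2.2, rfl⟩) (le_sInf ?_)
      rintro r ⟨μ, h1, h2, h3, rfl⟩
      exact ENNReal.ofReal_le_ofReal (hmin' μ ⟨h1, h2, h3⟩)
    -- KKT condition
    have hKKT : ∀ i ∈ I, c ≤ ∑ l, μ0 l * K l i := by
      intro i hi
      set δ : Fin n → ℝ := fun j => if j = i then 1 else 0 with hδ
      set d : Fin n → ℝ := δ - μ0 with hd
      have hδsum : ∑ j ∈ I, δ j = 1 := by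
        rw [hδ, Finset.sum_ite_eq' I i (fun _ => (1:ℝ))]; simp [hi]
      have hmem : ∀ t ∈ Set.Icc (0:ℝ) 1, (μ0 + t • d) ∈ Sset := by
        intro t ht
        refine ⟨fun j => ?_, fun j hj => ?_, ?_⟩
        · have hδj : 0 ≤ δ j := by rw [hδ]; dsimp; split <;> norm_num
          have : (μ0 + t • d) j = (1 - t) * μ0 j + t * δ j := by
            simp [hd, Pi.add_apply, Pi.smul_apply, Pi.sub_apply]; ring
          rw [this]
          have := hμ0S.1 j
          nlinarith [ht.1, ht.2]
        · have hδj : δ j = 0 := by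
            rw [hδ]; dsimp; split
            · next h => exact absurd (h ▸ hi) hj
            · rfl
          simp [hd, Pi.add_apply, Pi.smul_apply, Pi.sub_apply, hδj, hμ0S.2.1 j hj]
        · have : ∀ j, (μ0 + t • d) j = μ0 j + t * (δ j - μ0 j) := by
            intro j; simp [hd, Pi.add_apply, Pi.smul_apply, Pi.sub_apply]
          simp_rw [this]
          rw [Finset.sum_add_distrib, ← Finset.mul_sum, Finset.sum_sub_distrib,
            hδsum, hμ0S.2.2]
          ring
      have hquad : ∀ t ∈ Set.Ioc (0:ℝ) 1, 0 ≤ 2 * BF K μ0 d + t * QF K d := by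
        intro t ht
        have h1 : c ≤ f (μ0 + t • d) := hmin' _ (hmem t ⟨ht.1.le, ht.2⟩)
        rw [hfQ _ (hmem t ⟨ht.1.le, ht.2⟩).2.1, QF_expand hsym, hcQ] at h1
        have h2 : 0 ≤ t * (2 * BF K μ0 d + t * QF K d) := by nlinarith
        nlinarith [ht.1]
      have hB : 0 ≤ BF K μ0 d := by
        by_contra hB
        push_neg at hB
        rcases le_or_gt (QF K d) 0 with hQ | hQ
        · have := hquad 1 ⟨one_pos, le_refl 1⟩; linarith
        · have hq := hquad (min 1 (-(BF K μ0 d) / QF K d))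
            ⟨lt_min one_pos (div_pos (by linarith) hQ), min_le_left _ _⟩
          have htle : min 1 (-(BF K μ0 d) / QF K d) * QF K d ≤ -(BF K μ0 d) :=
            (le_div_iff₀ hQ).mp (min_le_right _ _)
          linarith
      have hBδ : BF K μ0 δ = ∑ l, μ0 l * K l i := by
        rw [BF]
        refine Finset.sum_congr rfl fun l _ => ?_
        rw [hδ]
        simp [mul_ite, ite_mul, Finset.sum_ite_eq']
      have hBd : BF K μ0 d = (∑ l, μ0 l * K l i) - c := by
        rw [hd, BF, ← hBδ, ← hcQ]
        rw [BF, QF, ← Finset.sum_sub_distrib]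
        refine Finset.sum_congr rfl fun l _ => ?_
        rw [← Finset.sum_sub_distrib]
        refine Finset.sum_congr rfl fun j _ => ?_
        simp [Pi.sub_apply]; ring
      linarith [hBd ▸ hB]
    -- lower bound for feasible a: 1 ≤ BF K μ0 a
    have hB1 : ∀ a : Fin n → ℝ, (∀ i ∈ I, 1 ≤ ∑ j, a j * K j i) → 1 ≤ BF K μ0 a := by
      intro a ha
      have h1 : BF K μ0 a = ∑ i ∈ I, μ0 i * (∑ j, a j * K j i) := by
        rw [BF]
        have hin : ∀ i, ∑ j, μ0 i * a j * K i j = μ0 i * ∑ j, a j * K j i := by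
          intro i
          rw [Finset.mul_sum]
          exact Finset.sum_congr rfl fun j _ => by rw [hsym i j]; ring
        simp_rw [hin]
        exact (Finset.sum_subset (Finset.subset_univ I)
          (fun i _ hi => by rw [hμ0S.2.1 i hi]; ring)).symm
      rw [h1]
      calc (1:ℝ) = ∑ i ∈ I, μ0 i := hμ0S.2.2.symm
        _ ≤ ∑ i ∈ I, μ0 i * (∑ j, a j * K j i) :=
            Finset.sum_le_sum fun i hi => le_mul_of_one_le_right (hμ0S.1 i) (ha i hi)
    rw [hsInfL]
    rcases eq_or_lt_of_le hc0 with hc | hc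
    · -- c = 0 : both sides are ⊤
      have hempty : {r : ℝ≥0∞ | ∃ a : Fin n → ℝ, (∀ i ∈ I, 1 ≤ ∑ j, a j * K j i) ∧
          r = ENNReal.ofReal (∑ i, ∑ j, a i * a j * K i j)} = ∅ := by
        ext r
        simp only [Set.mem_setOf_eq, Set.mem_empty_iff_false, iff_false, not_exists]
        rintro a ⟨ha, rfl⟩
        have h1 := hB1 a ha
        have h2 := BF_sq_le hsym hpsd μ0 a
        rw [hcQ, ← hc] at h2
        nlinarith
      rw [hempty, sInf_empty, ← hc]
      simp
    · -- 0 < c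
      rw [← ENNReal.ofReal_inv_of_pos hc]
      refine le_antisymm (le_sInf ?_) (sInf_le ⟨c⁻¹ • μ0, fun i hi => ?_, ?_⟩)
      · -- lower bound
        rintro r ⟨a, ha, rfl⟩
        refine ENNReal.ofReal_le_ofReal ?_
        have h1 := hB1 a ha
        have h2 := BF_sq_le hsym hpsd μ0 a
        rw [hcQ] at h2
        have h3 : 1 ≤ c * QF K a := by nlinarith
        rw [inv_eq_one_div, div_le_iff₀ hc]
        change (1:ℝ) ≤ QF K a * c
        nlinarith
      · -- feasibility of c⁻¹ • μ0
        have : ∑ j, (c⁻¹ • μ0) j * K j i = c⁻¹ * ∑ j, μ0 j * K j i := by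
          rw [Finset.mul_sum]
          exact Finset.sum_congr rfl fun j _ => by
            simp [Pi.smul_apply, smul_eq_mul]; ring
        rw [this]
        calc (1:ℝ) = c⁻¹ * c := (inv_mul_cancel₀ hc.ne').symm
          _ ≤ c⁻¹ * ∑ j, μ0 j * K j i :=
              mul_le_mul_of_nonneg_left (hKKT i hi) (by positivity)
      · -- value of c⁻¹ • μ0
        congr 1
        have : ∑ i, ∑ j, (c⁻¹ • μ0) i * (c⁻¹ • μ0) j * K i j
            = c⁻¹ * c⁻¹ * QF K μ0 := by
          rw [QF, Finset.mul_sum]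
          refine Finset.sum_congr rfl fun i _ => ?_
          rw [Finset.mul_sum]
          exact Finset.sum_congr rfl fun j _ => by
            simp [Pi.smul_apply, smul_eq_mul]; ring
        rw [this, hcQ]
        field_simp

end StmtAux

/-- Capacity duality: `Cap(I) = inf {‖h‖_H² : h ∈ H, h(i) ≥ 1 for i ∈ I}`, where the
RKHS `H` is the span of the `K(i,·)` and `h = ∑ aᵢ K(i,·)` has `‖h‖_H² = ∑ aᵢaⱼK(i,j)`. -/
theorem stmt15 {n : ℕ} {Ω : Type*} [MeasureSpace Ω]
    [IsProbabilityMeasure (ℙ : Measure Ω)]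
    (X : Ω → Fin n → ℝ) (hX : IsGaussianVector X)
    (K : Fin n → Fin n → ℝ)
    (hK : ∀ i j, K i j = ∫ ω, X ω i * X ω j ∂ℙ -
      (∫ ω, X ω i ∂ℙ) * (∫ ω, X ω j ∂ℙ))
    (I : Finset (Fin n)) :
    (sInf {r : ℝ≥0∞ | ∃ μ : Fin n → ℝ, (∀ i, 0 ≤ μ i) ∧ (∀ i ∉ I, μ i = 0) ∧
        (∑ i ∈ I, μ i) = 1 ∧
        r = ENNReal.ofReal (∑ i ∈ I, ∑ j ∈ I, μ i * K i j * μ j)})⁻¹ =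
      sInf {r : ℝ≥0∞ | ∃ a : Fin n → ℝ, (∀ i ∈ I, 1 ≤ ∑ j, a j * K j i) ∧
        r = ENNReal.ofReal (∑ i, ∑ j, a i * a j * K i j)} := by
  have hsym : ∀ i j, K i j = K j i := by
    intro i j
    have hcm : (∫ ω, X ω i * X ω j ∂ℙ) = ∫ ω, X ω j * X ω i ∂ℙ := by
      simp_rw [mul_comm]
    rw [hK i j, hK j i, hcm]; ring
  have hpsd : ∀ a : Fin n → ℝ, 0 ≤ QF K a := psd_of_gaussian hX K hK
  exact core_duality K hsym hpsd I
end
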